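/- arXiv:0907.5527 — 5 statements merged into one kernel-verified Lean document; each statement's English description precedes it below -/
import Mathlib

section
/- Let n ≥ 1 and let p be a finite sequence of natural numbers of length ℓ. Then every >lexₙ-descending chain starting at p, i.e. every sequence p = p₀ >lexₙ p₁ >lexₙ ⋯ >lexₙ p_m, has length m ≤ Ack(2·ℓ + 8, mc(p) + n). -/
/-- The maximal entry of a finite sequence of naturals (`0` for the empty sequence). -/
def mc (p : List ℕ) : ℕ := p.foldr max 0

/-- `lexGt p q` iff `|p| > |q|`, or `|p| = |q|` and there is an index `i` with
`(p)_j = (q)_j` for all `j < i` and `(p)_i > (q)_i`. -/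
def lexGt (p q : List ℕ) : Prop :=
  q.length < p.length ∨
    (p.length = q.length ∧
      ∃ i < p.length, (∀ j < i, p.getD j 0 = q.getD j 0) ∧ q.getD i 0 < p.getD i 0)

/-- The approximation `>lexₙ`:  `p >lexₙ q` iff `p >lex q` and `2·mc(p) + n ≥ mc(q)`. -/
def lexGtApprox (n : ℕ) (p q : List ℕ) : Prop :=
  lexGt p q ∧ mc q ≤ 2 * mc p + n

lemma mc_cons (a : ℕ) (l : List ℕ) : mc (a :: l) = max a (mc l) := rfl

lemma head_le_mc (p : List ℕ) : p.getD 0 0 ≤ mc p := by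
  cases p with
  | nil => simp [mc]
  | cons a l => simp [mc_cons]

lemma mc_tail_le (p : List ℕ) : mc p.tail ≤ mc p := by
  cases p with
  | nil => simp
  | cons a l => simp [mc_cons]

lemma tail_getD (p : List ℕ) (j : ℕ) : p.tail.getD j 0 = p.getD (j+1) 0 := by
  cases p <;> simp

lemma lexGt_length_le {p q : List ℕ} (h : lexGt p q) : q.length ≤ p.length := by
  rcases h with h | ⟨h, _⟩ <;> omega

lemma lexGt_head_or_tail {p q : List ℕ} {L : ℕ} (h : lexGt p q)
    (hp : p.length = L + 1) (hq : q.length = L + 1) :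
    q.getD 0 0 < p.getD 0 0 ∨
      (p.getD 0 0 = q.getD 0 0 ∧ lexGt p.tail q.tail) := by
  rcases h with h | ⟨_, i, hi, hbelow, hlt⟩
  · omega
  · cases i with
    | zero => exact Or.inl hlt
    | succ i' =>
      refine Or.inr ⟨hbelow 0 (Nat.succ_pos _), Or.inr ⟨?_, i', ?_, ?_, ?_⟩⟩
      · simp [hp, hq]
      · simp [hp]; omega
      · intro j hj
        rw [tail_getD, tail_getD]
        exact hbelow (j+1) (by omega)
      · rw [tail_getD, tail_getD]
        exact hlt



lemma ack_shift (k m x : ℕ) : ack m (x + k) ≤ ack (m + k) x := by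
  induction k generalizing x with
  | zero => rfl
  | succ k ih =>
    calc ack m (x + (k+1)) = ack m ((x+1) + k) := by ring_nf
    _ ≤ ack (m + k) (x+1) := ih (x+1)
    _ ≤ ack (m + k + 1) x := ack_succ_right_le_ack_succ_left _ _
    _ = ack (m + (k+1)) x := by ring_nf

lemma ack_iterate (t m : ℕ) : ack (t+1) m = (ack t)^[m+1] 1 := by
  induction m with
  | zero => simp [ack_succ_zero]
  | succ m ih =>
    rw [ack_succ_succ, ih, ← Function.iterate_succ_apply' (ack t)]

lemma iter_mono {f : ℕ → ℕ} (hmono : Monotone f) (k : ℕ) {x y : ℕ} (h : x ≤ y) :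
    f^[k] x ≤ f^[k] y := by
  induction k generalizing x y with
  | zero => exact h
  | succ k ih => rw [Function.iterate_succ_apply, Function.iterate_succ_apply]
                 exact ih (hmono h)

lemma le_iter {f : ℕ → ℕ} (hle : ∀ x, x ≤ f x) (k x : ℕ) : x ≤ f^[k] x := by
  induction k with
  | zero => rfl
  | succ k ih => rw [Function.iterate_succ_apply']
                 exact le_trans ih (hle _)

lemma iter_le_iter {f : ℕ → ℕ} (hmono : Monotone f) (hle : ∀ x, x ≤ f x)
    (j k x : ℕ) (h : j ≤ k) : f^[j] x ≤ f^[k] x := by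
  obtain ⟨c, rfl⟩ := Nat.exists_eq_add_of_le h
  rw [Function.iterate_add_apply]
  exact iter_mono hmono j (le_iter hle c x)

lemma ack_add_le (s x t : ℕ) : ack s x + t ≤ ack s (x + t) := by
  induction t with
  | zero => simp
  | succ t ih =>
    have := ack_strictMono_right s (show x + t < x + (t+1) by omega)
    omega

lemma iter_ack_add_le (s k x t : ℕ) : (ack s)^[k] x + t ≤ (ack s)^[k] (x + t) := by
  induction k generalizing x with
  | zero => simp
  | succ k ih =>
    rw [Function.iterate_succ_apply, Function.iterate_succ_apply]
    exact le_trans (ih (ack s x)) (iter_mono (ack_mono_right s) k (ack_add_le s x t))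

lemma key_ineq {s C : ℕ} (hs : 3 ≤ s) (hC : 1 ≤ C) :
    2 ^ (ack s (2*C) + 2) * C + ack s (2*C) + 1 ≤ ack (s+1) (2*C) := by
  set b := ack s (2*C) with hb
  have hCb : C ≤ b := le_trans (by omega) (lt_ack_right s (2*C)).le
  have h1 : 2 ^ (b + 2) * C + b + 1 ≤ 2 ^ (2*b+3) := by
    have hb1 : (b + 1) ≤ 2 ^ (b + 1) := (Nat.lt_two_pow_self (n := b+1)).le
    have h2 : 2 ^ (b+2) * C ≤ 2 ^ (b+2) * b := Nat.mul_le_mul_left _ hCb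
    have h3 : 2 ^ (b+2) * b + 2 ^ (b+1) ≤ 2 ^ (b+2) * (b+1) := by
      have : 2 ^ (b+1) ≤ 2 ^ (b+2) := Nat.pow_le_pow_right (by norm_num) (by omega)
      nlinarith
    have h4 : 2 ^ (b+2) * (b+1) ≤ 2 ^ (b+2) * 2 ^ (b+1) := Nat.mul_le_mul_left _ hb1
    have h5 : 2 ^ (b+2) * 2 ^ (b+1) = 2 ^ (2*b+3) := by rw [← pow_add]; ring_nf
    omega
  -- z := ack (s+1) (2C - 1) satisfies ack(s+1, 2C) = ack s z and z ≥ 2b + 3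
  obtain ⟨y, hy⟩ : ∃ y, 2 * C = y + 1 := ⟨2*C - 1, by omega⟩
  have hsplit : ack (s+1) (2*C) = ack s (ack (s+1) y) := by rw [hy, ack_succ_succ]
  set z := ack (s+1) y with hz
  have hy1 : 1 ≤ y := by omega
  have hz1 : ack s (y + 2) ≤ z := by
    obtain ⟨w, rfl⟩ : ∃ w, y = w + 1 := ⟨y - 1, by omega⟩
    rw [hz, ack_succ_succ]
    apply ack_mono_right s
    have := add_lt_ack (s+1) w
    omega
  have hz2 : 2 * b + 3 ≤ ack s (y + 2) := by
    obtain ⟨u, rfl⟩ : ∃ u, s = u + 1 := ⟨s - 1, by omega⟩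
    have : y + 2 = (y + 1) + 1 := by omega
    rw [this, ack_succ_succ, ← hy, ← hb]
    calc 2 * b + 3 = ack 2 b := (ack_two b).symm
    _ ≤ ack u b := ack_mono_left b (by omega)
  have hz3 : 2 * b + 3 ≤ z := le_trans hz2 hz1
  have hfin : 2 ^ (2*b + 3) ≤ ack s z := by
    calc 2 ^ (2*b+3) ≤ 2 ^ (z + 3) - 3 := by
          have h8 : 2 ^ (2*b+3+3) ≤ 2 ^ (z+3) := Nat.pow_le_pow_right (by norm_num) (by omega)
          have : 2 ^ (2*b+3+3) = 8 * 2 ^ (2*b+3) := by rw [pow_add]; ring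
          have hX : 1 ≤ 2 ^ (2*b+3) := Nat.one_le_two_pow
          omega
    _ = ack 3 z := (ack_three z).symm
    _ ≤ ack s z := ack_mono_left z hs
  rw [hsplit]
  omega

theorem fixedLen : ∀ (L : ℕ) (C m : ℕ) (d : ℕ → List ℕ), 1 ≤ C →
    (∀ i, i ≤ m → (d i).length = L) →
    (∀ i, i ≤ m → mc (d i) ≤ 2 ^ i * C) →
    (∀ i, i < m → lexGt (d i) (d (i+1))) →
    m ≤ ack (2*L+5) (2*C) := by
  intro L
  induction L with
  | zero =>
    intro C m d _ hlen _ hstep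
    by_contra hm
    have h1 : 1 ≤ m := by omega
    have := hstep 0 (by omega)
    rcases this with h | ⟨_, i, hi, _⟩
    · rw [hlen 0 (by omega), hlen 1 h1] at h; omega
    · rw [hlen 0 (by omega)] at hi; omega
  | succ L IH =>
    intro C m d hC hlen hmc hstep
    set s := 2*L+5 with hs
    -- ack self-application lemma
    have hackle : ∀ x : ℕ, x ≤ ack (s+1) x := fun x => (lt_ack_right _ x).le
    have hmono := ack_mono_right (s+1)
    -- a chain with no head-decrease is bounded via the tail chain and IH
    have tails : ∀ (C m : ℕ) (d : ℕ → List ℕ), 1 ≤ C →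
        (∀ i, i ≤ m → (d i).length = L + 1) →
        (∀ i, i ≤ m → mc (d i) ≤ 2 ^ i * C) →
        (∀ i, i < m → lexGt (d i) (d (i+1))) →
        (∀ i, i < m → ¬ (d (i+1)).getD 0 0 < (d i).getD 0 0) →
        m ≤ ack s (2*C) := by
      intro C m d hC hlen hmc hstep hnodec
      refine IH C m (fun i => (d i).tail) hC ?_ ?_ ?_
      · intro i hi
        have := hlen i hi
        rw [List.length_tail, this]; omega
      · intro i hi
        exact le_trans (mc_tail_le _) (hmc i hi)
      · intro i hi
        rcases lexGt_head_or_tail (hstep i hi) (hlen i (by omega)) (hlen (i+1) (by omega)) with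
          hdec | ⟨_, htl⟩
        · exact absurd hdec (hnodec i hi)
        · exact htl
    -- the inner claim, by induction on the head bound h
    have claim : ∀ (h C m : ℕ) (d : ℕ → List ℕ), 1 ≤ C →
        (∀ i, i ≤ m → (d i).length = L + 1) →
        (∀ i, i ≤ m → mc (d i) ≤ 2 ^ i * C) →
        (∀ i, i < m → lexGt (d i) (d (i+1))) →
        (d 0).getD 0 0 ≤ h →
        m ≤ (ack (s+1))^[h+1] (2*C) := by
      intro h
      induction h with
      | zero =>
        intro C m d hC hlen hmc hstep hhead
        by_cases hex : ∃ k, k < m ∧ (d (k+1)).getD 0 0 < (d k).getD 0 0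
        · exfalso
          set k := Nat.find hex with hk
          obtain ⟨hkm, hdec⟩ := Nat.find_spec hex
          rw [← hk] at hkm hdec
          have hmin : ∀ j, j < k → ¬ (j < m ∧ (d (j+1)).getD 0 0 < (d j).getD 0 0) :=
            fun j hj => Nat.find_min hex hj
          have headconst : ∀ i, i ≤ k → (d i).getD 0 0 = (d 0).getD 0 0 := by
            intro i hi
            induction i with
            | zero => rfl
            | succ i ihh =>
              have hik : i < k := by omega
              have him : i < m := by omega
              rcases lexGt_head_or_tail (hstep i him) (hlen i (by omega))
                  (hlen (i+1) (by omega)) with hdec' | ⟨heq, _⟩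
              · exact absurd ⟨him, hdec'⟩ (hmin i hik)
              · rw [← heq]; exact ihh (by omega)
          have := headconst k (le_refl k)
          omega
        · push_neg at hex
          have hm := tails C m d hC hlen hmc hstep (fun i hi h' => absurd h' (by
            have := hex i hi; omega))
          calc m ≤ ack s (2*C) := hm
          _ ≤ ack (s+1) (2*C) := ack_mono_left _ (by omega)
          _ = (ack (s+1))^[0+1] (2*C) := rfl
      | succ h ih =>
        intro C m d hC hlen hmc hstep hhead
        by_cases hex : ∃ k, k < m ∧ (d (k+1)).getD 0 0 < (d k).getD 0 0
        · set k := Nat.find hex with hk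
          obtain ⟨hkm, hdec⟩ := Nat.find_spec hex
          rw [← hk] at hkm hdec
          have hmin : ∀ j, j < k → ¬ (j < m ∧ (d (j+1)).getD 0 0 < (d j).getD 0 0) :=
            fun j hj => Nat.find_min hex hj
          -- the first k steps are tail steps, so k ≤ a
          have hka : k ≤ ack s (2*C) := by
            refine tails C k d hC (fun i hi => hlen i (by omega))
              (fun i hi => hmc i (by omega)) (fun i hi => hstep i (by omega)) ?_
            intro i hi h'
            exact (hmin i hi) ⟨by omega, h'⟩
          set a := ack s (2*C) with ha
          -- head stays constant up to k
          have headconst : ∀ i, i ≤ k → (d i).getD 0 0 = (d 0).getD 0 0 := by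
            intro i hi
            induction i with
            | zero => rfl
            | succ i ihh =>
              have hik : i < k := by omega
              have him : i < m := by omega
              rcases lexGt_head_or_tail (hstep i him) (hlen i (by omega))
                  (hlen (i+1) (by omega)) with hdec' | ⟨heq, _⟩
              · exact absurd ⟨him, hdec'⟩ (hmin i hik)
              · rw [← heq]; exact ihh (by omega)
          -- the remaining chain after step k
          obtain ⟨m', hm'⟩ : ∃ m', m = (k+1) + m' := ⟨m - (k+1), by omega⟩
          have hrest : m' ≤ (ack (s+1))^[h+1] (2*(2^(k+1)*C)) := by
            refine ih (2^(k+1)*C) m' (fun j => d (k+1+j)) ?_ ?_ ?_ ?_ ?_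
            · have : 1 ≤ 2^(k+1) := Nat.one_le_two_pow
              nlinarith
            · intro i hi; exact hlen (k+1+i) (by omega)
            · intro i hi
              calc mc (d (k+1+i)) ≤ 2 ^ (k+1+i) * C := hmc (k+1+i) (by omega)
              _ = 2 ^ i * (2^(k+1) * C) := by rw [pow_add]; ring
            · intro i hi
              show lexGt (d (k+1+i)) (d (k+1+(i+1)))
              rw [show k+1+(i+1) = (k+1+i)+1 from by omega]
              exact hstep (k+1+i) (by omega)
            · show (d (k+1)).getD 0 0 ≤ h
              have h2 := headconst k (le_refl k)
              omega
          -- combine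
          have hk2 : 2*(2^(k+1)*C) = 2^(k+2)*C := by rw [pow_succ]; ring
          rw [hk2] at hrest
          have hstep1 : 2^(k+2)*C + (a + 1) ≤ 2^(a+2)*C + a + 1 := by
            have : (2:ℕ)^(k+2) ≤ 2^(a+2) := Nat.pow_le_pow_right (by norm_num) (by omega)
            have := Nat.mul_le_mul_right C this
            omega
          calc m = m' + (a + 1 - (a - k)) := by omega
          _ ≤ m' + (a+1) := by omega
          _ ≤ (ack (s+1))^[h+1] (2^(k+2)*C) + (a+1) := by omega
          _ ≤ (ack (s+1))^[h+1] (2^(k+2)*C + (a+1)) := iter_ack_add_le _ _ _ _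
          _ ≤ (ack (s+1))^[h+1] (2^(a+2)*C + a + 1) := iter_mono hmono _ (by omega)
          _ ≤ (ack (s+1))^[h+1] (ack (s+1) (2*C)) := iter_mono hmono _ (key_ineq (by omega) hC)
          _ = (ack (s+1))^[h+1+1] (2*C) := (Function.iterate_succ_apply _ _ _).symm
        · push_neg at hex
          have hm := tails C m d hC hlen hmc hstep (fun i hi h' => absurd h' (by
            have := hex i hi; omega))
          calc m ≤ ack s (2*C) := hm
          _ ≤ ack (s+1) (2*C) := ack_mono_left _ (by omega)
          _ = (ack (s+1))^[1] (2*C) := rfl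
          _ ≤ (ack (s+1))^[h+1+1] (2*C) := iter_le_iter hmono hackle _ _ _ (by omega)
    -- conclude the successor case
    have hh0 : (d 0).getD 0 0 ≤ C := by
      have := le_trans (head_le_mc (d 0)) (hmc 0 (by omega))
      simpa using this
    have hmain := claim C C m d hC hlen hmc hstep hh0
    have h2C : ∀ C' : ℕ, 2*C' ≤ (ack (s+1))^[C'] 1 := by
      intro C'
      induction C' with
      | zero => simp
      | succ C' ihc =>
        rw [Function.iterate_succ_apply']
        have := add_lt_ack (s+1) ((ack (s+1))^[C'] 1)
        omega
    calc m ≤ (ack (s+1))^[C+1] (2*C) := hmain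
    _ ≤ (ack (s+1))^[C+1] ((ack (s+1))^[C] 1) := iter_mono hmono _ (h2C C)
    _ = (ack (s+1))^[(C+1)+C] 1 := (Function.iterate_add_apply _ (C+1) C 1).symm
    _ = ack (s+2) (2*C) := by
          rw [ack_iterate (s+1) (2*C)]
          congr 1
          omega
    _ = ack (2*(L+1)+5) (2*C) := by rw [hs]; congr 1

def pad (ℓ : ℕ) (q : List ℕ) : List ℕ :=
  q.length :: (q ++ List.replicate (ℓ - q.length) 0)

lemma pad_length {ℓ : ℕ} {q : List ℕ} (h : q.length ≤ ℓ) : (pad ℓ q).length = ℓ + 1 := by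
  simp [pad]; omega

lemma mc_append_replicate (q : List ℕ) (k : ℕ) :
    mc (q ++ List.replicate k 0) = mc q := by
  unfold mc
  rw [List.foldr_append]
  congr 1
  induction k with
  | zero => rfl
  | succ k ih => simpa [List.replicate_succ] using ih

lemma mc_pad (ℓ : ℕ) (q : List ℕ) : mc (pad ℓ q) = max q.length (mc q) := by
  rw [pad, mc_cons, mc_append_replicate]

lemma pad_getD_zero (ℓ : ℕ) (q : List ℕ) : (pad ℓ q).getD 0 0 = q.length := rfl

lemma pad_getD_succ {ℓ : ℕ} {q : List ℕ} {j : ℕ} (hj : j < q.length) :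
    (pad ℓ q).getD (j+1) 0 = q.getD j 0 := by
  rw [pad, List.getD_cons_succ]
  rw [List.getD_append _ _ _ _ hj]

lemma lexGt_pad {ℓ : ℕ} {p q : List ℕ} (h : lexGt p q)
    (hp : p.length ≤ ℓ) (hq : q.length ≤ ℓ) : lexGt (pad ℓ p) (pad ℓ q) := by
  rcases h with h | ⟨heq, i, hi, hbelow, hlt⟩
  · refine Or.inr ⟨by rw [pad_length hp, pad_length hq], 0, ?_, ?_, ?_⟩
    · rw [pad_length hp]; omega
    · intro j hj; omega
    · rw [pad_getD_zero, pad_getD_zero]; exact h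
  · refine Or.inr ⟨by rw [pad_length hp, pad_length hq], i+1, ?_, ?_, ?_⟩
    · rw [pad_length hp]; omega
    · intro j hj
      cases j with
      | zero => rw [pad_getD_zero, pad_getD_zero, heq]
      | succ j' =>
        rw [pad_getD_succ (by omega), pad_getD_succ (by omega)]
        exact hbelow j' (by omega)
    · rw [pad_getD_succ hi, pad_getD_succ (by rw [← heq]; exact hi)]
      exact hlt

/-- For `n ≥ 1` and `p` of length `ℓ`, every `>lexₙ`-descending chain
`p = p₀ >lexₙ p₁ >lexₙ ⋯ >lexₙ p_m` has length `m ≤ Ack(2·ℓ + 8, mc(p) + n)`. -/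
theorem lexApprox_chain_le_ack (n : ℕ) (hn : 1 ≤ n) (p : List ℕ) (ℓ : ℕ)
    (hℓ : p.length = ℓ) (m : ℕ) (d : ℕ → List ℕ) (hd0 : d 0 = p)
    (hchain : ∀ i < m, lexGtApprox n (d i) (d (i + 1))) :
    m ≤ ack (2 * ℓ + 8) (mc p + n) := by
  set M := mc p + n with hM
  have hM1 : 1 ≤ M := by omega
  -- lengths are bounded by ℓ
  have hL : ∀ i, i ≤ m → (d i).length ≤ ℓ := by
    intro i hi
    induction i with
    | zero => rw [hd0, hℓ]
    | succ i ih =>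
      exact le_trans (lexGt_length_le (hchain i (by omega)).1) (ih (by omega))
  -- max entries grow at most geometrically
  have hmc : ∀ i, i ≤ m → mc (d i) + n ≤ 2 ^ i * M := by
    intro i hi
    induction i with
    | zero => simp [hd0, hM]
    | succ i ih =>
      have h1 := (hchain i (by omega)).2
      have h2 := ih (by omega)
      have : (2:ℕ) ^ (i+1) * M = 2 * (2 ^ i * M) := by rw [pow_succ]; ring
      omega
  -- the padded chain
  set C := mc p + n + ℓ with hC
  have hfix := fixedLen (ℓ+1) C m (fun i => pad ℓ (d i)) (by omega) ?_ ?_ ?_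
  · -- final Ackermann arithmetic
    refine le_trans hfix ?_
    have h1 : 2*(ℓ+1)+5 = 2*ℓ+7 := by omega
    rw [h1]
    obtain ⟨M', hM'⟩ : ∃ M', M = M' + 1 := ⟨M - 1, by omega⟩
    have h2 : ack (2*ℓ+8) (mc p + n) = ack (2*ℓ+7) (ack (2*ℓ+8) M') := by
      rw [show mc p + n = M from rfl, hM', show 2*ℓ+8 = (2*ℓ+7)+1 from by omega,
        ack_succ_succ]
    rw [h2]
    apply ack_mono_right
    calc 2*C = 2*(M' + 1 + ℓ) := by rw [hC, hM] at *; omega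
    _ ≤ 2*(M' + (2*ℓ+6)) + 3 := by omega
    _ = ack 2 (M' + (2*ℓ+6)) := (ack_two _).symm
    _ ≤ ack (2 + (2*ℓ+6)) M' := ack_shift _ _ _
    _ = ack (2*ℓ+8) M' := by congr 1; omega
  · intro i hi
    exact pad_length (hL i hi)
  · intro i hi
    rw [mc_pad]
    have h1 := hL i hi
    have h2 := hmc i hi
    have h3 : (1:ℕ) ≤ 2^i := Nat.one_le_two_pow
    have h4 : 2^i * C = 2^i * M + 2^i * ℓ := by rw [hC, hM]; ring
    rcases max_cases (d i).length (mc (d i)) with ⟨he, _⟩ | ⟨he, _⟩ <;> rw [he] <;> nlinarith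
  · intro i hi
    exact lexGt_pad (hchain i hi).1 (hL i (by omega)) (hL (i+1) (by omega))
end

section
/- For all n ≥ 1 and all m ∈ ℕ, H_{ω^n}(m) ≤ Ack(2n, m). -/
/-!  Ordinals below `ω^ω` are represented by their Cantor normal forms: a list
`l : List ℕ` represents the ordinal `Σᵢ ω^i · l[i]` (little-endian coefficients). -/

/-- The list represents the ordinal `0`. -/
def isZero (l : List ℕ) : Prop := ∀ a ∈ l, a = 0

instance (l : List ℕ) : Decidable (isZero l) :=
  inferInstanceAs (Decidable (∀ a ∈ l, a = 0))

/-- The fundamental sequence: `fs x l` is (the representation of) `α[x]` where `α` is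
represented by `l`.  It implements `0[x] = 0`, `(β+1)[x] = β` and
`(β + ω^{γ+1}·k)[x] = β + ω^{γ+1}·(k−1) + ω^γ·(x+1)`. -/
def fs (x : ℕ) : List ℕ → List ℕ
  | [] => []
  | (a+1) :: l => a :: l
  | [0] => [0]
  | 0 :: (k+1) :: l => (x+1) :: k :: l
  | 0 :: 0 :: l => 0 :: fs x (0 :: l)
termination_by l => l.length

/-- The ordinal represented by a list of CNF coefficients. -/
noncomputable def toOrd : List ℕ → Ordinal.{0}
  | [] => 0
  | a :: l => Ordinal.omega0 * toOrd l + a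

theorem toOrd_fs_lt (x : ℕ) : ∀ l : List ℕ, ¬ isZero l → toOrd (fs x l) < toOrd l := by
  have helper : ∀ (B : Ordinal) (x k : ℕ),
      Ordinal.omega0 * (B + (k : Ordinal)) + ((x + 1 : ℕ) : Ordinal) <
        Ordinal.omega0 * (B + ((k + 1 : ℕ) : Ordinal)) := by
    intro B x k
    have e : B + ((k + 1 : ℕ) : Ordinal) = Order.succ (B + (k : Ordinal)) := by
      push_cast
      rw [← add_assoc, Ordinal.add_one_eq_succ]
    rw [e, Ordinal.mul_succ]
    exact (add_lt_add_iff_left _).mpr (Ordinal.natCast_lt_omega0 (x + 1))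
  intro l
  induction l using fs.induct with
  | case1 =>
      intro h
      exact absurd (by simp [isZero]) h
  | case2 a l =>
      intro _
      simp only [fs, toOrd]
      exact (add_lt_add_iff_left _).mpr (by exact_mod_cast Nat.lt_succ_self a)
  | case3 =>
      intro h
      exact absurd (by simp [isZero]) h
  | case4 k l =>
      intro _
      simp only [fs, toOrd]
      rw [Nat.cast_zero, add_zero]
      exact helper (Ordinal.omega0 * toOrd l) x k
  | case5 l ih =>
      intro h
      have h' : ¬ isZero (0 :: l) := by
        intro hz
        apply h
        intro a ha
        rcases List.mem_cons.mp ha with rfl | ha'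
        · rfl
        · exact hz a ha'
      have ih' := ih h'
      simp only [fs, toOrd, Nat.cast_zero, add_zero] at ih' ⊢
      first
        | exact mul_lt_mul_of_pos_left ih' Ordinal.omega0_pos
        | exact (Ordinal.mul_lt_mul_iff_left Ordinal.omega0_pos).2 ih'

local instance : WellFoundedRelation Ordinal.{0} := ⟨(· < ·), Ordinal.lt_wf⟩

/-- The Hardy functions: `H_0(x) = x` and `H_α(x) = H_{α[x]}(x+1)` for `α > 0`. -/
def hardy (l : List ℕ) (x : ℕ) : ℕ :=
  if h : isZero l then x else hardy (fs x l) (x + 1)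
termination_by toOrd l
decreasing_by exact toOrd_fs_lt x l h


theorem ack_iter_ack (n : ℕ) : ∀ (i m : ℕ), (ack n)^[i] (ack (n+1) m) = ack (n+1) (m + i)
  | 0, m => rfl
  | i+1, m => by
      rw [Function.iterate_succ_apply', ack_iter_ack n i m, ← ack_succ_succ]
      ring_nf

theorem ack_iter_le (n x : ℕ) : (ack n)^[x+1] (x+1) ≤ ack (n+2) x := by
  cases x with
  | zero =>
      simpa [ack_succ_zero] using ack_le_ack (Nat.le_succ n) (le_refl 1)
  | succ y =>
      set x := y + 1
      have h1 : (ack n)^[x+1] (x+1) ≤ (ack n)^[x+1] (ack (n+1) x) :=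
        ((ack_strictMono_right n).monotone.iterate (x+1)) (lt_ack_right _ _)
      have h2 : (ack n)^[x+1] (ack (n+1) x) = ack (n+1) (2*x+1) := by
        rw [ack_iter_ack]; ring_nf
      have h3 : 2*x+1 ≤ ack (n+2) y := by
        calc 2*x+1 = 2*y+3 := by omega
        _ = ack 2 y := (ack_two y).symm
        _ ≤ ack (n+2) y := ack_le_ack (by omega) le_rfl
      calc (ack n)^[x+1] (x+1) ≤ ack (n+1) (2*x+1) := by rw [← h2]; exact h1
        _ ≤ ack (n+1) (ack (n+2) y) := ack_mono_right _ h3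
        _ = ack (n+2) x := (ack_succ_succ _ _).symm

/-- Upper bound function: iterate `ack (2k)` once per unit of the coefficient at position `k`. -/
def Abnd : ℕ → List ℕ → ℕ → ℕ
  | _, [], x => x
  | k, a :: t, x => Abnd (k+1) t ((ack (2*k))^[a] x)

theorem Abnd_mono : ∀ (t : List ℕ) (k : ℕ), Monotone (Abnd k t)
  | [], _ => monotone_id
  | a :: t, k => fun x y h => by
      exact Abnd_mono t (k+1) (((ack_strictMono_right (2*k)).monotone.iterate a) h)

theorem isZero_replicate (k : ℕ) : isZero (List.replicate k 0) := by
  intro a ha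
  exact (List.eq_of_mem_replicate ha)

theorem not_isZero_app (k a : ℕ) (t : List ℕ) :
    ¬ isZero (List.replicate k 0 ++ (a+1) :: t) := by
  intro h
  have := h (a+1) (by simp)
  omega

theorem rep_append (k : ℕ) (t : List ℕ) :
    List.replicate k 0 ++ (0 : ℕ) :: t = List.replicate (k+1) 0 ++ t := by
  rw [List.replicate_succ' , List.append_assoc]
  rfl

theorem fs_rep (x : ℕ) : ∀ (k b : ℕ) (t : List ℕ),
    fs x (List.replicate (k+1) 0 ++ (b+1) :: t) = List.replicate k 0 ++ (x+1) :: b :: t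
  | 0, b, t => by simp [fs]
  | k+1, b, t => by
      show fs x (0 :: 0 :: (List.replicate k 0 ++ (b+1) :: t)) = _
      rw [fs]
      rw [show (0 : ℕ) :: (List.replicate k 0 ++ (b+1) :: t)
            = List.replicate (k+1) 0 ++ (b+1) :: t from rfl]
      rw [fs_rep x k b t]
      rfl

theorem hardy_isZero (l : List ℕ) (x : ℕ) (h : isZero l) : hardy l x = x := by
  rw [hardy]; simp [h]

theorem hardy_step (l : List ℕ) (x : ℕ) (h : ¬ isZero l) :
    hardy l x = hardy (fs x l) (x+1) := by
  rw [hardy]; simp [h]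

theorem hardy_le_Abnd (k : ℕ) (t : List ℕ) (x : ℕ) :
    hardy (List.replicate k 0 ++ t) x ≤ Abnd k t x := by
  match t with
  | [] =>
      rw [hardy_isZero _ _ (by simpa using isZero_replicate k)]
      exact le_refl x
  | 0 :: t' =>
      rw [rep_append]
      exact hardy_le_Abnd (k+1) t' x
  | (a+1) :: t' =>
      match k with
      | 0 =>
          have hnz := not_isZero_app 0 a t'
          rw [hardy_step _ x (by simpa using hnz)]
          have hfs : fs x ((a+1) :: t') = a :: t' := by simp [fs]
          simp only [List.replicate, List.nil_append] at *
          rw [hfs]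
          have := hardy_le_Abnd 0 (a :: t') (x+1)
          change hardy (a :: t') (x+1) ≤ Abnd 0 (a :: t') (x+1) at this
          refine this.trans ?_
          show Abnd 1 t' ((ack (2*0))^[a] (x+1)) ≤ Abnd 1 t' ((ack (2*0))^[a+1] x)
          rw [Function.iterate_succ_apply]
          simp [ack_zero]
      | j+1 =>
          have hnz := not_isZero_app (j+1) a t'
          rw [hardy_step _ x hnz, fs_rep]
          have ih := hardy_le_Abnd j ((x+1) :: a :: t') (x+1)
          refine ih.trans ?_
          show Abnd (j+1) (a :: t') ((ack (2*j))^[x+1] (x+1))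
              ≤ Abnd (j+1) ((a+1) :: t') x
          show Abnd (j+2) t' ((ack (2*(j+1)))^[a] ((ack (2*j))^[x+1] (x+1)))
              ≤ Abnd (j+2) t' ((ack (2*(j+1)))^[a+1] x)
          apply Abnd_mono
          rw [Function.iterate_succ_apply]
          apply (ack_strictMono_right (2*(j+1))).monotone.iterate a
          show (ack (2*j))^[x+1] (x+1) ≤ ack (2*(j+1)) x
          rw [show 2*(j+1) = 2*j+2 by ring]
          exact ack_iter_le (2*j) x
  termination_by (toOrd (List.replicate k 0 ++ t), t.length)
  decreasing_by
  · simp only [rep_append]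
    exact Prod.Lex.right _ (by simp)
  · apply Prod.Lex.left
    have := toOrd_fs_lt x (List.replicate 0 0 ++ (a+1) :: t') (not_isZero_app 0 a t')
    simpa [fs] using this
  · apply Prod.Lex.left
    have := toOrd_fs_lt x (List.replicate (j+1) 0 ++ (a+1) :: t') (not_isZero_app (j+1) a t')
    rwa [fs_rep] at this

/-- For all `n ≥ 1` and all `m`, `H_{ω^n}(m) ≤ Ack(2n, m)`, where
`ω^n` is represented by the coefficient list with a single `1` at position `n`. -/
theorem hardy_omega_pow_le_ack (n m : ℕ) (hn : 1 ≤ n) :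
    hardy (List.replicate n 0 ++ [1]) m ≤ ack (2 * n) m := by
  calc hardy (List.replicate n 0 ++ [1]) m ≤ Abnd n [1] m := hardy_le_Abnd n [1] m
    _ = ack (2*n) m := by simp [Abnd]
end

section
/- Let F be a finite signature containing at least one constant and R a finite TRS over T(F,V) compatible with a Knuth–Bendix order ≻kbo induced by an admissible weight function and a precedence on F. Then there exists c ∈ ℕ such that for every ground term t, every →_R-derivation starting from t has length at most Ack(2^{c·|t|}, 0). -/
/-- First-order terms over a signature `F` (with arity function `ar`) and variables `V`. -/
inductive Tm (F : Type) (ar : F → ℕ) (V : Type) : Type where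
  | var : V → Tm F ar V
  | fn : (f : F) → (Fin (ar f) → Tm F ar V) → Tm F ar V

namespace Tm

variable {F : Type} {ar : F → ℕ} {V : Type}

/-- The size of a term: the number of occurrences of variables and function symbols. -/
def size : Tm F ar V → ℕ
  | var _ => 1
  | fn _ ts => 1 + ∑ i, (ts i).size

/-- Number of occurrences of the variable `x` in a term. -/
def count [DecidableEq V] (x : V) : Tm F ar V → ℕ
  | var y => if y = x then 1 else 0
  | fn _ ts => ∑ i, (ts i).count x

/-- The weight of a term with respect to a weight function `(w, w₀)`. -/
def weight (w : F → ℕ) (w0 : ℕ) : Tm F ar V → ℕ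
  | var _ => w0
  | fn f ts => w f + ∑ i, weight w w0 (ts i)

/-- `f` is the special symbol: a unary symbol of weight `0`. -/
def IsSpec (ar : F → ℕ) (w : F → ℕ) (f : F) : Prop := ar f = 1 ∧ w f = 0

/-- Stripping all leading occurrences of the special symbol: if `t = ∘^a t'` where the
root of `t'` is not special, then `core t = t'`. -/
def core (w : F → ℕ) : Tm F ar V → Tm F ar V
  | var x => var x
  | fn f ts =>
      if h : ar f = 1 ∧ w f = 0 then core w (ts ⟨0, by omega⟩) else fn f ts

/-- The number of leading occurrences of the special symbol: if `t = ∘^a t'` where the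
root of `t'` is not special, then `specCount t = a`. -/
def specCount (w : F → ℕ) : Tm F ar V → ℕ
  | var _ => 0
  | fn f ts =>
      if h : ar f = 1 ∧ w f = 0 then specCount w (ts ⟨0, by omega⟩) + 1 else 0

end Tm

/-- The Knuth–Bendix order induced by a precedence `prec` and a weight function
`(w, w0)`:  `s ≻kbo t` iff every variable occurs at least as often in `s` as in `t`
and either the weight of `s` is larger, or the weights are equal, `s = ∘^a g(s₁,…,sₙ)`,
`t = ∘^b h(t₁,…,tₘ)` and either `a > b`, or `a = b` and `g ≻ h`, or `a = b`, `g = h`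
and `(s₁,…,sₙ)` is lexicographically larger than `(t₁,…,tₙ)`. -/
inductive Kbo {F : Type} {ar : F → ℕ} {V : Type} [DecidableEq V]
    (prec : F → F → Prop) (w : F → ℕ) (w0 : ℕ) : Tm F ar V → Tm F ar V → Prop
  | wt {s t} : (∀ x, Tm.count x t ≤ Tm.count x s) →
      Tm.weight w w0 t < Tm.weight w w0 s → Kbo prec w w0 s t
  | spec {s t g ss h ts} : (∀ x, Tm.count x t ≤ Tm.count x s) →
      Tm.weight w w0 s = Tm.weight w w0 t →
      Tm.core w s = Tm.fn g ss → Tm.core w t = Tm.fn h ts →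
      Tm.specCount w t < Tm.specCount w s → Kbo prec w w0 s t
  | prec {s t g ss h ts} : (∀ x, Tm.count x t ≤ Tm.count x s) →
      Tm.weight w w0 s = Tm.weight w w0 t →
      Tm.core w s = Tm.fn g ss → Tm.core w t = Tm.fn h ts →
      Tm.specCount w s = Tm.specCount w t → prec g h → Kbo prec w w0 s t
  | lex {s t g ss ts} : (∀ x, Tm.count x t ≤ Tm.count x s) →
      Tm.weight w w0 s = Tm.weight w w0 t →
      Tm.core w s = Tm.fn g ss → Tm.core w t = Tm.fn g ts →
      Tm.specCount w s = Tm.specCount w t →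
      ∀ i : Fin (ar g), (∀ j, j < i → ss j = ts j) → Kbo prec w w0 (ss i) (ts i) →
      Kbo prec w w0 s t

namespace Tm

variable {F : Type} {ar : F → ℕ} {V : Type}

/-- Application of a substitution to a term. -/
def subst (σ : V → Tm F ar V) : Tm F ar V → Tm F ar V
  | var x => σ x
  | fn f ts => fn f fun i => (ts i).subst σ

/-- The set of function symbols occurring in a term. -/
def funcs : Tm F ar V → Set F
  | var _ => ∅
  | fn f ts => insert f (⋃ i, (ts i).funcs)

/-- The maximal nesting of the special symbol:  `spec (∘^a x) = a` and
`spec (∘^a g(t₁,…,tₙ)) = max({a} ∪ {spec tᵢ})`. -/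
def specNest (w : F → ℕ) : Tm F ar V → ℕ
  | var _ => 0
  | fn f ts =>
      if h : ar f = 1 ∧ w f = 0 then
        max (Tm.specCount w (fn f ts)) (specNest w (ts ⟨0, by omega⟩))
      else Finset.univ.sup fun i => specNest w (ts i)

/-- The rank of the first non-special symbol:  `rkT (∘^a x) = 0` and
`rkT (∘^a g(t₁,…,tₙ)) = rk g`. -/
def rkT (w : F → ℕ) (rk : F → ℕ) : Tm F ar V → ℕ
  | var _ => 0
  | fn f ts => if h : ar f = 1 ∧ w f = 0 then rkT w rk (ts ⟨0, by omega⟩) else rk f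

/-- The maximal rank of non-special symbols:  `mrk (∘^a x) = 0` and
`mrk (∘^a g(t₁,…,tₙ)) = max({rk g} ∪ {mrk tᵢ})`. -/
def mrk (w : F → ℕ) (rk : F → ℕ) : Tm F ar V → ℕ
  | var _ => 0
  | fn f ts =>
      if h : ar f = 1 ∧ w f = 0 then mrk w rk (ts ⟨0, by omega⟩)
      else max (rk f) (Finset.univ.sup fun i => mrk w rk (ts i))

end Tm

/-- `R` is a term rewrite system: left-hand sides are not variables and every variable
of a right-hand side occurs in the corresponding left-hand side. -/
def IsTRS {F : Type} {ar : F → ℕ} (R : Set (Tm F ar ℕ × Tm F ar ℕ)) : Prop :=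
  ∀ p ∈ R, (∀ x : ℕ, p.1 ≠ Tm.var x) ∧
    ∀ x : ℕ, 0 < Tm.count x p.2 → 0 < Tm.count x p.1

/-- The rewrite relation of `R`: the closure of the rules under contexts and
substitutions. -/
inductive Rew {F : Type} {ar : F → ℕ} (R : Set (Tm F ar ℕ × Tm F ar ℕ)) :
    Tm F ar ℕ → Tm F ar ℕ → Prop
  | rule {l r} (σ : ℕ → Tm F ar ℕ) : (l, r) ∈ R → Rew R (l.subst σ) (r.subst σ)
  | congr {f} {ts : Fin (ar f) → Tm F ar ℕ} (i) {t'} :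
      Rew R (ts i) t' → Rew R (.fn f ts) (.fn f (Function.update ts i t'))

/-- A `ρ`-derivation of length `n`: `d 0 → d 1 → ⋯ → d n`. -/
def ChainOf {A : Type} (ρ : A → A → Prop) (n : ℕ) (d : ℕ → A) : Prop :=
  ∀ i < n, ρ (d i) (d (i + 1))

/-! ### Auxiliary development -/

section Aux1

open Tm Finset

variable {F : Type} {ar : F → ℕ}

/-- Ground terms: no variables. -/
def Ground (t : Tm F ar ℕ) : Prop := ∀ x : ℕ, Tm.count x t = 0

lemma sum_fin_one {n : ℕ} (h : n = 1) (g : Fin n → ℕ) :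
    ∑ i, g i = g ⟨0, by omega⟩ := by subst h; simp

lemma fin_eq_zero {n : ℕ} (h : n = 1) (i : Fin n) : i = ⟨0, by omega⟩ := by
  subst h; exact Subsingleton.elim _ _

/-- free variables of a term -/
def fv : Tm F ar ℕ → Finset ℕ
  | .var x => {x}
  | .fn _ ts => Finset.univ.biUnion fun i => fv (ts i)

lemma count_eq_zero_of_not_mem_fv :
    ∀ {t : Tm F ar ℕ} {x : ℕ}, x ∉ fv t → Tm.count x t = 0 := by
  intro t
  induction t with
  | var y =>
      intro x hx
      simp only [fv, Finset.mem_singleton] at hx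
      simp [Tm.count, Ne.symm hx]
  | fn f ts ih =>
      intro x hx
      simp only [fv, Finset.mem_biUnion, Finset.mem_univ, true_and, not_exists] at hx
      simp only [Tm.count]
      exact Finset.sum_eq_zero fun i _ => ih i (hx i)

lemma count_fn_zero {f : F} {ts : Fin (ar f) → Tm F ar ℕ} {y : ℕ}
    (h : Tm.count y (Tm.fn f ts) = 0) (i : Fin (ar f)) : Tm.count y (ts i) = 0 := by
  simp only [Tm.count] at h
  exact (Finset.sum_eq_zero_iff.mp h) i (Finset.mem_univ i)

section Subst

variable (σ : ℕ → Tm F ar ℕ) (w : F → ℕ) (w0 : ℕ)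

lemma count_subst (x : ℕ) :
    ∀ (u : Tm F ar ℕ) (S : Finset ℕ), (∀ y ∉ S, Tm.count y u = 0) →
      Tm.count x (u.subst σ) = ∑ y ∈ S, Tm.count y u * Tm.count x (σ y) := by
  intro u
  induction u with
  | var z =>
      intro S hS
      have hz : z ∈ S := by
        by_contra h
        have := hS z h
        simp [Tm.count] at this
      show Tm.count x (σ z) = _
      rw [Finset.sum_eq_single z]
      · simp [Tm.count]
      · intro y _ hne
        simp [Tm.count, Ne.symm hne]
      · intro h; exact absurd hz h
  | fn f ts ih =>
      intro S hS
      show ∑ i, Tm.count x ((ts i).subst σ) = _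
      calc ∑ i, Tm.count x ((ts i).subst σ)
          = ∑ i, ∑ y ∈ S, Tm.count y (ts i) * Tm.count x (σ y) := by
            refine Finset.sum_congr rfl fun i _ => ih i S fun y hy => ?_
            exact count_fn_zero (hS y hy) i
        _ = ∑ y ∈ S, ∑ i, Tm.count y (ts i) * Tm.count x (σ y) := Finset.sum_comm
        _ = ∑ y ∈ S, Tm.count y (Tm.fn f ts) * Tm.count x (σ y) := by
            refine Finset.sum_congr rfl fun y _ => ?_
            simp only [Tm.count]
            rw [Finset.sum_mul]

lemma weight_subst :
    ∀ (u : Tm F ar ℕ) (S : Finset ℕ), (∀ y ∉ S, Tm.count y u = 0) →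
      Tm.weight w w0 (u.subst σ) + (∑ y ∈ S, Tm.count y u) * w0
        = Tm.weight w w0 u + ∑ y ∈ S, Tm.count y u * Tm.weight w w0 (σ y) := by
  intro u
  induction u with
  | var z =>
      intro S hS
      have hz : z ∈ S := by
        by_contra h
        have := hS z h
        simp [Tm.count] at this
      have h1 : ∑ y ∈ S, Tm.count y (Tm.var z : Tm F ar ℕ) = 1 := by
        simp only [Tm.count]
        rw [Finset.sum_ite_eq S z (fun _ => 1)]
        simp [hz]
      have h2 : ∑ y ∈ S, Tm.count y (Tm.var z : Tm F ar ℕ) * Tm.weight w w0 (σ y)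
          = Tm.weight w w0 (σ z) := by
        rw [Finset.sum_eq_single z]
        · simp [Tm.count]
        · intro y _ hne; simp [Tm.count, Ne.symm hne]
        · intro h; exact absurd hz h
      rw [h1, h2]
      show Tm.weight w w0 (σ z) + 1 * w0 = w0 + Tm.weight w w0 (σ z)
      ring
  | fn f ts ih =>
      intro S hS
      have hi : ∀ i, Tm.weight w w0 ((ts i).subst σ) + (∑ y ∈ S, Tm.count y (ts i)) * w0
          = Tm.weight w w0 (ts i) + ∑ y ∈ S, Tm.count y (ts i) * Tm.weight w w0 (σ y) :=
        fun i => ih i S fun y hy => count_fn_zero (hS y hy) i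
      show (w f + ∑ i, Tm.weight w w0 ((ts i).subst σ)) + (∑ y ∈ S, ∑ i, Tm.count y (ts i)) * w0
          = (w f + ∑ i, Tm.weight w w0 (ts i)) + ∑ y ∈ S, (∑ i, Tm.count y (ts i)) * Tm.weight w w0 (σ y)
      have e1 : (∑ y ∈ S, ∑ i, Tm.count y (ts i)) * w0
          = ∑ i, (∑ y ∈ S, Tm.count y (ts i)) * w0 := by
        rw [Finset.sum_comm, Finset.sum_mul]
      have e2 : ∑ y ∈ S, (∑ i, Tm.count y (ts i)) * Tm.weight w w0 (σ y)
          = ∑ i, ∑ y ∈ S, Tm.count y (ts i) * Tm.weight w w0 (σ y) := by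
        rw [← Finset.sum_comm]
        exact Finset.sum_congr rfl fun y _ => Finset.sum_mul _ _ _
      rw [e1, e2, add_assoc, ← Finset.sum_add_distrib]
      have : ∑ i, (Tm.weight w w0 ((ts i).subst σ) + (∑ y ∈ S, Tm.count y (ts i)) * w0)
          = ∑ i, (Tm.weight w w0 (ts i) + ∑ y ∈ S, Tm.count y (ts i) * Tm.weight w w0 (σ y)) :=
        Finset.sum_congr rfl fun i _ => hi i
      rw [this, Finset.sum_add_distrib, add_assoc]

lemma size_subst :
    ∀ (u : Tm F ar ℕ) (S : Finset ℕ), (∀ y ∉ S, Tm.count y u = 0) →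
      Tm.size (u.subst σ) + ∑ y ∈ S, Tm.count y u
        = Tm.size u + ∑ y ∈ S, Tm.count y u * Tm.size (σ y) := by
  intro u
  induction u with
  | var z =>
      intro S hS
      have hz : z ∈ S := by
        by_contra h
        have := hS z h
        simp [Tm.count] at this
      have h1 : ∑ y ∈ S, Tm.count y (Tm.var z : Tm F ar ℕ) = 1 := by
        simp only [Tm.count]
        rw [Finset.sum_ite_eq S z (fun _ => 1)]
        simp [hz]
      have h2 : ∑ y ∈ S, Tm.count y (Tm.var z : Tm F ar ℕ) * Tm.size (σ y)
          = Tm.size (σ z) := by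
        rw [Finset.sum_eq_single z]
        · simp [Tm.count]
        · intro y _ hne; simp [Tm.count, Ne.symm hne]
        · intro h; exact absurd hz h
      rw [h1, h2]
      show Tm.size (σ z) + 1 = 1 + Tm.size (σ z)
      ring
  | fn f ts ih =>
      intro S hS
      have hi : ∀ i, Tm.size ((ts i).subst σ) + ∑ y ∈ S, Tm.count y (ts i)
          = Tm.size (ts i) + ∑ y ∈ S, Tm.count y (ts i) * Tm.size (σ y) :=
        fun i => ih i S fun y hy => count_fn_zero (hS y hy) i
      show (1 + ∑ i, Tm.size ((ts i).subst σ)) + ∑ y ∈ S, ∑ i, Tm.count y (ts i)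
          = (1 + ∑ i, Tm.size (ts i)) + ∑ y ∈ S, (∑ i, Tm.count y (ts i)) * Tm.size (σ y)
      have e1 : ∑ y ∈ S, ∑ i, Tm.count y (ts i) = ∑ i, ∑ y ∈ S, Tm.count y (ts i) :=
        Finset.sum_comm
      have e2 : ∑ y ∈ S, (∑ i, Tm.count y (ts i)) * Tm.size (σ y)
          = ∑ i, ∑ y ∈ S, Tm.count y (ts i) * Tm.size (σ y) := by
        rw [← Finset.sum_comm]
        exact Finset.sum_congr rfl fun y _ => Finset.sum_mul _ _ _
      rw [e1, e2, add_assoc, ← Finset.sum_add_distrib, add_assoc, ← Finset.sum_add_distrib]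
      congr 1
      exact Finset.sum_congr rfl fun i _ => hi i

end Subst

end Aux1
section Aux2

open Tm Finset

variable {F : Type} {ar : F → ℕ}

lemma size_pos : ∀ t : Tm F ar ℕ, 1 ≤ Tm.size t := by
  intro t
  cases t with
  | var x => exact le_refl 1
  | fn f ts => show 1 ≤ 1 + _ ; omega

lemma countsum_le_size : ∀ (u : Tm F ar ℕ) (S : Finset ℕ), ∑ y ∈ S, Tm.count y u ≤ Tm.size u := by
  intro u
  induction u with
  | var z =>
      intro S
      show (∑ y ∈ S, if z = y then 1 else 0) ≤ 1
      rw [Finset.sum_ite_eq S z (fun _ => 1)]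
      split <;> omega
  | fn f ts ih =>
      intro S
      show (∑ y ∈ S, ∑ i, Tm.count y (ts i)) ≤ 1 + ∑ i, Tm.size (ts i)
      rw [Finset.sum_comm]
      have := Finset.sum_le_sum (s := (Finset.univ : Finset (Fin (ar f))))
        (fun i _ => ih i S)
      omega

section W

variable {w : F → ℕ} {w0 : ℕ}

lemma w0_le_weight (hwc : ∀ c, ar c = 0 → w0 ≤ w c) :
    ∀ t : Tm F ar ℕ, w0 ≤ Tm.weight w w0 t := by
  intro t
  induction t with
  | var x => exact le_refl _
  | fn f ts ih =>
      show w0 ≤ w f + ∑ i, Tm.weight w w0 (ts i)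
      rcases Nat.eq_zero_or_pos (ar f) with h | h
      · have := hwc f h
        omega
      · have h1 : Tm.weight w w0 (ts ⟨0, h⟩) ≤ ∑ i, Tm.weight w w0 (ts i) :=
          Finset.single_le_sum (f := fun i => Tm.weight w w0 (ts i)) (fun i _ => Nat.zero_le _) (Finset.mem_univ _)
        have := ih ⟨0, h⟩
        omega

lemma sum_fin_one' {n : ℕ} (h : n = 1) (g : Fin n → ℕ) (i : Fin n) : ∑ j, g j = g i := by
  subst h
  rw [Fin.sum_univ_one]
  congr
  exact Subsingleton.elim _ _

lemma weight_fn_eq_arg {f : F} {ts : Fin (ar f) → Tm F ar ℕ}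
    (h : ar f = 1 ∧ w f = 0) (i : Fin (ar f)) :
    Tm.weight w w0 (Tm.fn f ts) = Tm.weight w w0 (ts i) := by
  show w f + ∑ j, Tm.weight w w0 (ts j) = _
  rw [sum_fin_one' h.1 (fun j => Tm.weight w w0 (ts j)) i, h.2, zero_add]

lemma count_fn_eq_arg {f : F} {ts : Fin (ar f) → Tm F ar ℕ} {x : ℕ}
    (h : ar f = 1) (i : Fin (ar f)) :
    Tm.count x (Tm.fn f ts) = Tm.count x (ts i) := by
  show ∑ j, Tm.count x (ts j) = _
  rw [sum_fin_one' h (fun j => Tm.count x (ts j)) i]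

lemma size_fn_eq_arg {f : F} {ts : Fin (ar f) → Tm F ar ℕ}
    (h : ar f = 1) (i : Fin (ar f)) :
    Tm.size (Tm.fn f ts) = Tm.size (ts i) + 1 := by
  show 1 + ∑ j, Tm.size (ts j) = _
  rw [sum_fin_one' h (fun j => Tm.size (ts j)) i]
  omega

lemma weight_core : ∀ t : Tm F ar ℕ, Tm.weight w w0 (Tm.core w t) = Tm.weight w w0 t := by
  intro t
  induction t with
  | var x => rfl
  | fn f ts ih =>
      by_cases h : ar f = 1 ∧ w f = 0
      · show Tm.weight w w0 (if h : ar f = 1 ∧ w f = 0 then Tm.core w (ts ⟨0, by omega⟩) else Tm.fn f ts) = _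
        rw [dif_pos h]
        exact (ih _).trans (weight_fn_eq_arg h _).symm
      · show Tm.weight w w0 (if h : ar f = 1 ∧ w f = 0 then Tm.core w (ts ⟨0, by omega⟩) else Tm.fn f ts) = _
        rw [dif_neg h]

lemma count_core (x : ℕ) : ∀ t : Tm F ar ℕ, Tm.count x (Tm.core w t) = Tm.count x t := by
  intro t
  induction t with
  | var y => rfl
  | fn f ts ih =>
      by_cases h : ar f = 1 ∧ w f = 0
      · show Tm.count x (if h : ar f = 1 ∧ w f = 0 then Tm.core w (ts ⟨0, by omega⟩) else Tm.fn f ts) = _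
        rw [dif_pos h]
        exact (ih _).trans (count_fn_eq_arg h.1 _).symm
      · show Tm.count x (if h : ar f = 1 ∧ w f = 0 then Tm.core w (ts ⟨0, by omega⟩) else Tm.fn f ts) = _
        rw [dif_neg h]

lemma core_not_special : ∀ {u : Tm F ar ℕ} {g : F} {us : Fin (ar g) → Tm F ar ℕ},
    Tm.core w u = Tm.fn g us → ¬(ar g = 1 ∧ w g = 0) := by
  intro u
  induction u with
  | var x => intro g us h; exact absurd h (by simp [Tm.core])
  | fn f ts ih =>
      intro g us h
      by_cases hs : ar f = 1 ∧ w f = 0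
      · rw [show Tm.core w (Tm.fn f ts) = if h : ar f = 1 ∧ w f = 0 then Tm.core w (ts ⟨0, by omega⟩) else Tm.fn f ts from rfl, dif_pos hs] at h
        exact ih _ h
      · rw [show Tm.core w (Tm.fn f ts) = if h : ar f = 1 ∧ w f = 0 then Tm.core w (ts ⟨0, by omega⟩) else Tm.fn f ts from rfl, dif_neg hs] at h
        injection h with h1 h2
        subst h1
        exact hs

lemma core_subst (σ : ℕ → Tm F ar ℕ) :
    ∀ {u : Tm F ar ℕ} {g : F} {us : Fin (ar g) → Tm F ar ℕ},
      Tm.core w u = Tm.fn g us →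
      Tm.core w (u.subst σ) = Tm.fn g (fun i => (us i).subst σ) ∧
        Tm.specCount w (u.subst σ) = Tm.specCount w u := by
  intro u
  induction u with
  | var x => intro g us h; exact absurd h (by simp [Tm.core])
  | fn f ts ih =>
      intro g us h
      by_cases hs : ar f = 1 ∧ w f = 0
      · rw [show Tm.core w (Tm.fn f ts) = if h : ar f = 1 ∧ w f = 0 then Tm.core w (ts ⟨0, by omega⟩) else Tm.fn f ts from rfl, dif_pos hs] at h
        obtain ⟨ih1, ih2⟩ := ih _ h
        constructor
        · show Tm.core w (Tm.fn f (fun i => (ts i).subst σ)) = _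
          rw [show Tm.core w (Tm.fn f (fun i => (ts i).subst σ)) = if h : ar f = 1 ∧ w f = 0 then Tm.core w ((ts ⟨0, by omega⟩).subst σ) else Tm.fn f (fun i => (ts i).subst σ) from rfl, dif_pos hs]
          exact ih1
        · show Tm.specCount w (Tm.fn f (fun i => (ts i).subst σ)) = _
          rw [show Tm.specCount w (Tm.fn f (fun i => (ts i).subst σ)) = if h : ar f = 1 ∧ w f = 0 then Tm.specCount w ((ts ⟨0, by omega⟩).subst σ) + 1 else 0 from rfl, dif_pos hs]
          rw [show Tm.specCount w (Tm.fn f ts) = if h : ar f = 1 ∧ w f = 0 then Tm.specCount w (ts ⟨0, by omega⟩) + 1 else 0 from rfl, dif_pos hs]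
          rw [ih2]
      · rw [show Tm.core w (Tm.fn f ts) = if h : ar f = 1 ∧ w f = 0 then Tm.core w (ts ⟨0, by omega⟩) else Tm.fn f ts from rfl, dif_neg hs] at h
        injection h with h1 h2
        subst h1
        have h2' : ts = us := eq_of_heq h2
        subst h2'
        constructor
        · show Tm.core w (Tm.fn f (fun i => (ts i).subst σ)) = _
          rw [show Tm.core w (Tm.fn f (fun i => (ts i).subst σ)) = if h : ar f = 1 ∧ w f = 0 then Tm.core w ((ts ⟨0, by omega⟩).subst σ) else Tm.fn f (fun i => (ts i).subst σ) from rfl, dif_neg hs]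
        · show Tm.specCount w (Tm.fn f (fun i => (ts i).subst σ)) = _
          rw [show Tm.specCount w (Tm.fn f (fun i => (ts i).subst σ)) = if h : ar f = 1 ∧ w f = 0 then Tm.specCount w ((ts ⟨0, by omega⟩).subst σ) + 1 else 0 from rfl, dif_neg hs]
          rw [show Tm.specCount w (Tm.fn f ts) = if h : ar f = 1 ∧ w f = 0 then Tm.specCount w (ts ⟨0, by omega⟩) + 1 else 0 from rfl, dif_neg hs]

end W

section KboBasic

variable {prec : F → F → Prop} {w : F → ℕ} {w0 : ℕ}

lemma kbo_count {s t : Tm F ar ℕ} (h : Kbo prec w w0 s t) :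
    ∀ x, Tm.count x t ≤ Tm.count x s := by
  cases h <;> assumption

lemma kbo_weight_le {s t : Tm F ar ℕ} (h : Kbo prec w w0 s t) :
    Tm.weight w w0 t ≤ Tm.weight w w0 s := by
  cases h <;> omega

lemma wkey (a b u v : ℕ) (hab : a ≤ b) (huv : u ≤ v) : a * v + b * u ≤ b * v + a * u := by
  obtain ⟨d, rfl⟩ := Nat.le.dest hab
  obtain ⟨e, rfl⟩ := Nat.le.dest huv
  ring_nf
  nlinarith [Nat.zero_le (d * e)]

end KboBasic

end Aux2
section Aux3

open Tm Finset

variable {F : Type} {ar : F → ℕ}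

lemma sum_update_eq {f : F} (ts : Fin (ar f) → Tm F ar ℕ) (i : Fin (ar f)) (t' : Tm F ar ℕ)
    (φ : Tm F ar ℕ → ℕ) :
    ∑ j, φ (Function.update ts i t' j) = φ t' + ∑ j ∈ Finset.univ.erase i, φ (ts j) := by
  have h : ∀ j, φ (Function.update ts i t' j) = Function.update (fun k => φ (ts k)) i (φ t') j :=
    fun j => Function.apply_update (fun _ x => φ x) ts i t' j
  simp only [h]
  rw [Finset.sum_update_of_mem (Finset.mem_univ i), Finset.sdiff_singleton_eq_erase]

lemma sum_split_eq {f : F} (ts : Fin (ar f) → Tm F ar ℕ) (i : Fin (ar f))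
    (φ : Tm F ar ℕ → ℕ) :
    ∑ j, φ (ts j) = φ (ts i) + ∑ j ∈ Finset.univ.erase i, φ (ts j) :=
  (Finset.add_sum_erase _ _ (Finset.mem_univ i)).symm

section KboClosure

variable {prec : F → F → Prop} {w : F → ℕ} {w0 : ℕ}

lemma subst_count_le (σ : ℕ → Tm F ar ℕ) {s t : Tm F ar ℕ}
    (hc : ∀ x, Tm.count x t ≤ Tm.count x s) :
    ∀ x, Tm.count x (t.subst σ) ≤ Tm.count x (s.subst σ) := by
  intro x
  rw [count_subst σ x t (fv s ∪ fv t)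
      (fun y hy => count_eq_zero_of_not_mem_fv (fun hm => hy (Finset.mem_union_right _ hm))),
    count_subst σ x s (fv s ∪ fv t)
      (fun y hy => count_eq_zero_of_not_mem_fv (fun hm => hy (Finset.mem_union_left _ hm)))]
  exact Finset.sum_le_sum fun y _ => Nat.mul_le_mul_right _ (hc y)

lemma subst_weight_key (hwc : ∀ c, ar c = 0 → w0 ≤ w c) (σ : ℕ → Tm F ar ℕ)
    {s t : Tm F ar ℕ} (hc : ∀ x, Tm.count x t ≤ Tm.count x s) :
    Tm.weight w w0 (t.subst σ) + Tm.weight w w0 s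
      ≤ Tm.weight w w0 (s.subst σ) + Tm.weight w w0 t := by
  set S := fv s ∪ fv t with hSdef
  have Es := weight_subst σ w w0 s S
    (fun y hy => count_eq_zero_of_not_mem_fv (fun hm => hy (Finset.mem_union_left _ hm)))
  have Et := weight_subst σ w w0 t S
    (fun y hy => count_eq_zero_of_not_mem_fv (fun hm => hy (Finset.mem_union_right _ hm)))
  rw [Finset.sum_mul] at Es Et
  have key : (∑ y ∈ S, Tm.count y t * Tm.weight w w0 (σ y)) + ∑ y ∈ S, Tm.count y s * w0
      ≤ (∑ y ∈ S, Tm.count y s * Tm.weight w w0 (σ y)) + ∑ y ∈ S, Tm.count y t * w0 := by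
    rw [← Finset.sum_add_distrib, ← Finset.sum_add_distrib]
    exact Finset.sum_le_sum fun y _ => wkey _ _ _ _ (hc y) (w0_le_weight hwc (σ y))
  omega

lemma kbo_subst (hwc : ∀ c, ar c = 0 → w0 ≤ w c) (σ : ℕ → Tm F ar ℕ)
    {l r : Tm F ar ℕ} (h : Kbo prec w w0 l r) :
    Kbo prec w w0 (l.subst σ) (r.subst σ) := by
  induction h with
  | @wt s t hc hlt =>
      exact Kbo.wt (subst_count_le σ hc)
        (by have := subst_weight_key hwc σ hc; omega)
  | @spec s t g ss h' ts hc hw hcs hct hsc =>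
      have hcσ := subst_count_le σ hc
      have hkey := subst_weight_key hwc σ hc
      rcases Nat.lt_or_ge (Tm.weight w w0 (t.subst σ)) (Tm.weight w w0 (s.subst σ)) with hlt | hge
      · exact Kbo.wt hcσ hlt
      · have heq : Tm.weight w w0 (s.subst σ) = Tm.weight w w0 (t.subst σ) := by omega
        obtain ⟨hcs', hscs⟩ := core_subst σ hcs
        obtain ⟨hct', hsct⟩ := core_subst σ hct
        exact Kbo.spec hcσ heq hcs' hct' (by omega)
  | @prec s t g ss h' ts hc hw hcs hct hsc hp =>
      have hcσ := subst_count_le σ hc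
      have hkey := subst_weight_key hwc σ hc
      rcases Nat.lt_or_ge (Tm.weight w w0 (t.subst σ)) (Tm.weight w w0 (s.subst σ)) with hlt | hge
      · exact Kbo.wt hcσ hlt
      · have heq : Tm.weight w w0 (s.subst σ) = Tm.weight w w0 (t.subst σ) := by omega
        obtain ⟨hcs', hscs⟩ := core_subst σ hcs
        obtain ⟨hct', hsct⟩ := core_subst σ hct
        exact Kbo.prec hcσ heq hcs' hct' (by omega) hp
  | @lex s t g ss ts hc hw hcs hct hsc i hpre hk ih =>
      have hcσ := subst_count_le σ hc
      have hkey := subst_weight_key hwc σ hc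
      rcases Nat.lt_or_ge (Tm.weight w w0 (t.subst σ)) (Tm.weight w w0 (s.subst σ)) with hlt | hge
      · exact Kbo.wt hcσ hlt
      · have heq : Tm.weight w w0 (s.subst σ) = Tm.weight w w0 (t.subst σ) := by omega
        obtain ⟨hcs', hscs⟩ := core_subst σ hcs
        obtain ⟨hct', hsct⟩ := core_subst σ hct
        exact Kbo.lex hcσ heq hcs' hct' (by omega) i
          (fun j hj => congrArg (Tm.subst σ) (hpre j hj)) ih

lemma kbo_congr {f : F} {ts : Fin (ar f) → Tm F ar ℕ} (i : Fin (ar f)) {t' : Tm F ar ℕ}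
    (h : Kbo prec w w0 (ts i) t') :
    Kbo prec w w0 (Tm.fn f ts) (Tm.fn f (Function.update ts i t')) := by
  have hcnt : ∀ x, Tm.count x (Tm.fn f (Function.update ts i t')) ≤ Tm.count x (Tm.fn f ts) := by
    intro x
    show ∑ j, Tm.count x (Function.update ts i t' j) ≤ ∑ j, Tm.count x (ts j)
    rw [sum_update_eq ts i t' (Tm.count x), sum_split_eq ts i (Tm.count x)]
    exact Nat.add_le_add_right (kbo_count h x) _
  have e1 : Tm.weight w w0 (Tm.fn f (Function.update ts i t'))
      = w f + (Tm.weight w w0 t' + ∑ j ∈ Finset.univ.erase i, Tm.weight w w0 (ts j)) := by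
    show w f + ∑ j, Tm.weight w w0 (Function.update ts i t' j) = _
    rw [sum_update_eq ts i t' (Tm.weight w w0)]
  have e2 : Tm.weight w w0 (Tm.fn f ts)
      = w f + (Tm.weight w w0 (ts i) + ∑ j ∈ Finset.univ.erase i, Tm.weight w w0 (ts j)) := by
    show w f + ∑ j, Tm.weight w w0 (ts j) = _
    rw [sum_split_eq ts i (Tm.weight w w0)]
  by_cases hlt : Tm.weight w w0 t' < Tm.weight w w0 (ts i)
  · exact Kbo.wt hcnt (by omega)
  · have heq : Tm.weight w w0 (ts i) = Tm.weight w w0 t' :=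
      le_antisymm (Nat.le_of_not_lt hlt) (kbo_weight_le h)
    have hWF : Tm.weight w w0 (Tm.fn f ts) = Tm.weight w w0 (Tm.fn f (Function.update ts i t')) := by
      omega
    by_cases hs : ar f = 1 ∧ w f = 0
    · -- special root
      have hone : ∀ j k : Fin (ar f), j = k := by
        intro j k
        have h1 := j.isLt
        have h2 := k.isLt
        exact Fin.ext (by omega)
      have hupd : ∀ j : Fin (ar f), Function.update ts i t' j = t' := by
        intro j
        rw [hone j i, Function.update_self]
      have ecs : ∀ u : Tm F ar ℕ, Tm.core w (ts i) = u →
          Tm.core w (Tm.fn f ts) = u := by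
        intro u hu
        show (if h : ar f = 1 ∧ w f = 0 then Tm.core w (ts ⟨0, by omega⟩) else Tm.fn f ts) = u
        rw [dif_pos hs]
        exact (congrArg (Tm.core w) (congrArg ts (hone _ i))).trans hu
      have ect : ∀ u : Tm F ar ℕ, Tm.core w t' = u →
          Tm.core w (Tm.fn f (Function.update ts i t')) = u := by
        intro u hu
        show (if h : ar f = 1 ∧ w f = 0 then Tm.core w (Function.update ts i t' ⟨0, by omega⟩)
          else Tm.fn f (Function.update ts i t')) = u
        rw [dif_pos hs]
        exact (congrArg (Tm.core w) (hupd _)).trans hu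
      have es : Tm.specCount w (Tm.fn f ts) = Tm.specCount w (ts i) + 1 := by
        show (if h : ar f = 1 ∧ w f = 0 then Tm.specCount w (ts ⟨0, by omega⟩) + 1 else 0) = _
        rw [dif_pos hs]
        exact congrArg (· + 1) (congrArg (Tm.specCount w) (congrArg ts (hone _ i)))
      have et : Tm.specCount w (Tm.fn f (Function.update ts i t')) = Tm.specCount w t' + 1 := by
        show (if h : ar f = 1 ∧ w f = 0 then
            Tm.specCount w (Function.update ts i t' ⟨0, by omega⟩) + 1 else 0) = _
        rw [dif_pos hs]
        exact congrArg (· + 1) (congrArg (Tm.specCount w) (hupd _))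
      cases h with
      | wt _ hlt' => omega
      | @spec _ _ g ss h' tt hc hw hcs hct hsc =>
          exact Kbo.spec hcnt hWF (ecs _ hcs) (ect _ hct) (by omega)
      | @prec _ _ g ss h' tt hc hw hcs hct hsc hp =>
          exact Kbo.prec hcnt hWF (ecs _ hcs) (ect _ hct) (by omega) hp
      | @lex _ _ g ss tt hc hw hcs hct hsc i' hpre hk =>
          exact Kbo.lex hcnt hWF (ecs _ hcs) (ect _ hct) (by omega) i' hpre hk
    · -- non-special root
      refine Kbo.lex (g := f) (ss := ts) (ts := Function.update ts i t') hcnt hWF ?_ ?_ ?_ i ?_ ?_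
      · show (if h : ar f = 1 ∧ w f = 0 then Tm.core w (ts ⟨0, by omega⟩) else Tm.fn f ts)
          = Tm.fn f ts
        rw [dif_neg hs]
      · show (if h : ar f = 1 ∧ w f = 0 then Tm.core w (Function.update ts i t' ⟨0, by omega⟩)
          else Tm.fn f (Function.update ts i t')) = Tm.fn f (Function.update ts i t')
        rw [dif_neg hs]
      · show (if h : ar f = 1 ∧ w f = 0 then Tm.specCount w (ts ⟨0, by omega⟩) + 1 else 0)
          = (if h : ar f = 1 ∧ w f = 0 then
              Tm.specCount w (Function.update ts i t' ⟨0, by omega⟩) + 1 else 0)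
        rw [dif_neg hs, dif_neg hs]
      · intro j hj
        exact (Function.update_of_ne (ne_of_lt hj) t' ts).symm
      · simp only [Function.update_self]
        exact h

variable {R : Finset (Tm F ar ℕ × Tm F ar ℕ)}

lemma rew_kbo (hwc : ∀ c, ar c = 0 → w0 ≤ w c)
    (hcompat : ∀ p ∈ R, Kbo prec w w0 p.1 p.2) {s t : Tm F ar ℕ}
    (h : Rew (↑R : Set (Tm F ar ℕ × Tm F ar ℕ)) s t) : Kbo prec w w0 s t := by
  induction h with
  | @rule l r σ hmem => exact kbo_subst hwc σ (hcompat _ (Finset.mem_coe.mp hmem))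
  | @congr f ts i t' hr ih => exact kbo_congr i ih

lemma rew_ground (hwc : ∀ c, ar c = 0 → w0 ≤ w c)
    (hcompat : ∀ p ∈ R, Kbo prec w w0 p.1 p.2) {s t : Tm F ar ℕ}
    (h : Rew (↑R : Set (Tm F ar ℕ × Tm F ar ℕ)) s t) (hg : Ground s) : Ground t := by
  intro x
  have h1 := kbo_count (rew_kbo hwc hcompat h) x
  have h2 := hg x
  omega

lemma rew_size (hcompat : ∀ p ∈ R, Kbo prec w w0 p.1 p.2) {K : ℕ}
    (hK : ∀ p ∈ R, Tm.size p.2 ≤ K) {s t : Tm F ar ℕ}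
    (h : Rew (↑R : Set (Tm F ar ℕ × Tm F ar ℕ)) s t) :
    Tm.size t ≤ Tm.size s + K := by
  induction h with
  | @rule l r σ hmem =>
      have hmem' := Finset.mem_coe.mp hmem
      have hcnt := kbo_count (hcompat _ hmem')
      have El := size_subst σ l (fv l ∪ fv r)
        (fun y hy => count_eq_zero_of_not_mem_fv (fun hm => hy (Finset.mem_union_left _ hm)))
      have Er := size_subst σ r (fv l ∪ fv r)
        (fun y hy => count_eq_zero_of_not_mem_fv (fun hm => hy (Finset.mem_union_right _ hm)))
      have h1 : ∑ y ∈ fv l ∪ fv r, Tm.count y r * Tm.size (σ y)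
          ≤ ∑ y ∈ fv l ∪ fv r, Tm.count y l * Tm.size (σ y) :=
        Finset.sum_le_sum fun y _ => Nat.mul_le_mul_right _ (hcnt y)
      have h3 : ∑ y ∈ fv l ∪ fv r, Tm.count y l ≤ Tm.size l := countsum_le_size l _
      have h5 : Tm.size r ≤ K := hK _ hmem'
      omega
  | @congr f ts i t' hr ih =>
      have e1 : Tm.size (Tm.fn f (Function.update ts i t'))
          = 1 + (Tm.size t' + ∑ j ∈ Finset.univ.erase i, Tm.size (ts j)) := by
        show 1 + ∑ j, Tm.size (Function.update ts i t' j) = _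
        rw [sum_update_eq ts i t' Tm.size]
      have e2 : Tm.size (Tm.fn f ts)
          = 1 + (Tm.size (ts i) + ∑ j ∈ Finset.univ.erase i, Tm.size (ts j)) := by
        show 1 + ∑ j, Tm.size (ts j) = _
        rw [sum_split_eq ts i Tm.size]
      omega

end KboClosure

end Aux3
section Interp

open Tm Finset

variable {F : Type} {ar : F → ℕ}

/-- exponent scale: `EE m1 W` bounds the CNF-degree of weight-`W` terms. -/
def EE (m1 : ℕ) : ℕ → ℕ
  | 0 => 1
  | W + 1 => m1 * EE m1 W + 1

lemma EE_pos (m1 W : ℕ) : 1 ≤ EE m1 W := by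
  cases W with
  | zero => exact le_refl 1
  | succ W => show 1 ≤ m1 * EE m1 W + 1; omega

lemma EE_pred (m1 : ℕ) {W : ℕ} (hW : 1 ≤ W) : EE m1 W = m1 * EE m1 (W - 1) + 1 := by
  cases W with
  | zero => omega
  | succ W => rfl

lemma EE_mono (m1 : ℕ) (hm1 : 1 ≤ m1) : Monotone (EE m1) := by
  apply monotone_nat_of_le_succ
  intro W
  have h := EE_pos m1 W
  show EE m1 W ≤ m1 * EE m1 W + 1
  nlinarith

/-- a block of coefficients based at position `b` -/
def Blk (b : ℕ) (u : ℕ → ℕ) : ℕ → ℕ := fun j => if b ≤ j then u (j - b) else 0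

/-- the interpretation of terms as coefficient vectors of ordinals `< ω^ω` -/
def oo (w : F → ℕ) (w0 : ℕ) (rk : F → ℕ) (P M : ℕ) : Tm F ar ℕ → ℕ → ℕ
  | .var _ => fun _ => 0
  | .fn f ts =>
      if h : ar f = 1 ∧ w f = 0 then
        fun j => oo w w0 rk P M (ts ⟨0, by omega⟩) j
          + (if j = EE (M + 1) (Tm.weight w w0 (Tm.fn f ts)) - 1 then P else 0)
      else
        fun j => (if j = EE (M + 1) (Tm.weight w w0 (Tm.fn f ts)) - 1 then rk f + 1 else 0)
          + ∑ i : Fin (ar f),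
              Blk (EE (M + 1) (Tm.weight w w0 (Tm.fn f ts) - 1) * (M - (i : ℕ)))
                (oo w w0 rk P M (ts i)) j

/-- canonical representation of the interpretation of a ground term via its core -/
def RepV (w : F → ℕ) (w0 : ℕ) (rk : F → ℕ) (P M : ℕ) (a : ℕ) (g : F)
    (us : Fin (ar g) → Tm F ar ℕ) (W : ℕ) : ℕ → ℕ :=
  fun j => (if j = EE (M + 1) W - 1 then a * P + rk g + 1 else 0)
    + ∑ i : Fin (ar g),
        Blk (EE (M + 1) (W - 1) * (M - (i : ℕ))) (oo w w0 rk P M (us i)) j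

/-- (reverse) lexicographic comparison of coefficient vectors -/
def GtLex (u v : ℕ → ℕ) : Prop := ∃ k, v k < u k ∧ ∀ j, k < j → u j = v j

section InterpLemmas

variable {w : F → ℕ} {w0 : ℕ} {rk : F → ℕ} {P M : ℕ}

lemma oo_fn_spec {f : F} {ts : Fin (ar f) → Tm F ar ℕ} (hs : ar f = 1 ∧ w f = 0) (j : ℕ) :
    oo w w0 rk P M (Tm.fn f ts) j
      = oo w w0 rk P M (ts ⟨0, by omega⟩) j
        + (if j = EE (M + 1) (Tm.weight w w0 (Tm.fn f ts)) - 1 then P else 0) := by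
  simp only [oo]
  rw [dif_pos hs]

lemma oo_fn_ns {f : F} {ts : Fin (ar f) → Tm F ar ℕ} (hs : ¬(ar f = 1 ∧ w f = 0)) (j : ℕ) :
    oo w w0 rk P M (Tm.fn f ts) j
      = (if j = EE (M + 1) (Tm.weight w w0 (Tm.fn f ts)) - 1 then rk f + 1 else 0)
        + ∑ i : Fin (ar f),
            Blk (EE (M + 1) (Tm.weight w w0 (Tm.fn f ts) - 1) * (M - (i : ℕ)))
              (oo w w0 rk P M (ts i)) j := by
  simp only [oo]
  rw [dif_neg hs]

lemma weight_fn_arg_lt (hw0 : 0 < w0) (hwc : ∀ c, ar c = 0 → w0 ≤ w c)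
    {f : F} {ts : Fin (ar f) → Tm F ar ℕ}
    (hns : ¬(ar f = 1 ∧ w f = 0)) (i : Fin (ar f)) :
    Tm.weight w w0 (ts i) < Tm.weight w w0 (Tm.fn f ts) := by
  rcases Nat.lt_or_ge (ar f) 2 with h2 | h2
  · have h1 : ar f = 1 := by have := i.isLt; omega
    have hwf : 1 ≤ w f := by
      rcases Nat.eq_zero_or_pos (w f) with h | h
      · exact absurd ⟨h1, h⟩ hns
      · exact h
    have hsum : ∑ j, Tm.weight w w0 (ts j) = Tm.weight w w0 (ts i) :=
      sum_fin_one' h1 (fun j => Tm.weight w w0 (ts j)) i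
    show Tm.weight w w0 (ts i) < w f + ∑ j, Tm.weight w w0 (ts j)
    omega
  · have hk : ∃ k : Fin (ar f), i ≠ k := by
      rcases Nat.eq_zero_or_pos i.val with h | h
      · exact ⟨⟨1, by omega⟩, fun he => by
          have := congrArg Fin.val he; simp only [] at this; omega⟩
      · exact ⟨⟨0, by omega⟩, fun he => by
          have := congrArg Fin.val he; simp only [] at this; omega⟩
    obtain ⟨k, hik⟩ := hk
    have hpair : Tm.weight w w0 (ts i) + Tm.weight w w0 (ts k) ≤ ∑ j, Tm.weight w w0 (ts j) := by
      calc Tm.weight w w0 (ts i) + Tm.weight w w0 (ts k)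
          = ∑ j ∈ ({i, k} : Finset (Fin (ar f))), Tm.weight w w0 (ts j) :=
            (Finset.sum_pair (f := fun j => Tm.weight w w0 (ts j)) hik).symm
        _ ≤ ∑ j, Tm.weight w w0 (ts j) :=
            Finset.sum_le_sum_of_subset (Finset.subset_univ _)
    have hwk := w0_le_weight hwc (ts k)
    show Tm.weight w w0 (ts i) < w f + ∑ j, Tm.weight w w0 (ts j)
    omega

lemma oo_supp (hw0 : 0 < w0) (hwc : ∀ c, ar c = 0 → w0 ≤ w c) (hM : ∀ f : F, ar f ≤ M) :
    ∀ (t : Tm F ar ℕ) (j : ℕ), EE (M + 1) (Tm.weight w w0 t) ≤ j →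
      oo w w0 rk P M t j = 0 := by
  intro t
  induction t with
  | var x => intro j hj; rfl
  | fn f ts ih =>
      intro j hj
      have hW1 : 1 ≤ Tm.weight w w0 (Tm.fn f ts) := le_trans hw0 (w0_le_weight hwc _)
      have hEpos := EE_pos (M + 1) (Tm.weight w w0 (Tm.fn f ts))
      by_cases hs : ar f = 1 ∧ w f = 0
      · rw [oo_fn_spec hs j]
        have hweq : Tm.weight w w0 (Tm.fn f ts) = Tm.weight w w0 (ts ⟨0, by omega⟩) :=
          weight_fn_eq_arg hs _
        rw [ih _ j (by rw [← hweq]; exact hj), if_neg (by omega)]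
      · rw [oo_fn_ns hs j, if_neg (by omega)]
        have hE : EE (M + 1) (Tm.weight w w0 (Tm.fn f ts))
            = (M + 1) * EE (M + 1) (Tm.weight w w0 (Tm.fn f ts) - 1) + 1 :=
          EE_pred (M + 1) hW1
        have hzero : ∀ i : Fin (ar f), i ∈ Finset.univ →
            Blk (EE (M + 1) (Tm.weight w w0 (Tm.fn f ts) - 1) * (M - (i : ℕ)))
              (oo w w0 rk P M (ts i)) j = 0 := by
          intro i _
          unfold Blk
          split
          · next hb =>
              apply ih
              have hwi : Tm.weight w w0 (ts i) ≤ Tm.weight w w0 (Tm.fn f ts) - 1 := by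
                have := weight_fn_arg_lt (ts := ts) hw0 hwc hs i
                omega
              have hEi : EE (M + 1) (Tm.weight w w0 (ts i))
                  ≤ EE (M + 1) (Tm.weight w w0 (Tm.fn f ts) - 1) :=
                EE_mono (M + 1) (by omega) hwi
              have hMi : (M - (i : ℕ)) + 1 ≤ M + 1 := by omega
              have hmul : EE (M + 1) (Tm.weight w w0 (Tm.fn f ts) - 1) * (M - (i : ℕ))
                    + EE (M + 1) (Tm.weight w w0 (Tm.fn f ts) - 1)
                  ≤ (M + 1) * EE (M + 1) (Tm.weight w w0 (Tm.fn f ts) - 1) := by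
                calc EE (M + 1) (Tm.weight w w0 (Tm.fn f ts) - 1) * (M - (i : ℕ))
                      + EE (M + 1) (Tm.weight w w0 (Tm.fn f ts) - 1)
                    = ((M - (i : ℕ)) + 1) * EE (M + 1) (Tm.weight w w0 (Tm.fn f ts) - 1) := by
                      ring
                  _ ≤ (M + 1) * EE (M + 1) (Tm.weight w w0 (Tm.fn f ts) - 1) :=
                      Nat.mul_le_mul_right _ hMi
              omega
          · rfl
        rw [Finset.sum_eq_zero hzero]
        rfl

lemma mul_size_arg_eq {f : F} {ts : Fin (ar f) → Tm F ar ℕ} (hs : ar f = 1)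
    (i : Fin (ar f)) (P : ℕ) :
    P * Tm.size (ts i) + P = P * Tm.size (Tm.fn f ts) := by
  rw [size_fn_eq_arg hs i]
  ring

lemma oo_coeff (hP : ∀ f : F, rk f + 1 ≤ P) :
    ∀ (t : Tm F ar ℕ) (j : ℕ), oo w w0 rk P M t j ≤ P * Tm.size t := by
  intro t
  induction t with
  | var x => intro j; exact Nat.zero_le _
  | fn f ts ih =>
      intro j
      by_cases hs : ar f = 1 ∧ w f = 0
      · rw [oo_fn_spec hs j]
        calc oo w w0 rk P M (ts ⟨0, by omega⟩) j
              + (if j = EE (M + 1) (Tm.weight w w0 (Tm.fn f ts)) - 1 then P else 0)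
            ≤ P * Tm.size (ts ⟨0, by omega⟩) + P :=
              add_le_add (ih _ j) (by split <;> omega)
          _ = P * Tm.size (Tm.fn f ts) := mul_size_arg_eq hs.1 _ P
      · rw [oo_fn_ns hs j]
        have hsumb : ∑ i : Fin (ar f),
              Blk (EE (M + 1) (Tm.weight w w0 (Tm.fn f ts) - 1) * (M - (i : ℕ)))
                (oo w w0 rk P M (ts i)) j
            ≤ ∑ i, P * Tm.size (ts i) := by
          refine Finset.sum_le_sum fun i _ => ?_
          unfold Blk
          split
          · exact ih i _
          · exact Nat.zero_le _
        have hsz : Tm.size (Tm.fn f ts) = 1 + ∑ i, Tm.size (ts i) := rfl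
        have h2 : P * (1 + ∑ i, Tm.size (ts i)) = P + ∑ i, P * Tm.size (ts i) := by
          rw [Nat.mul_add, Nat.mul_one, Finset.mul_sum]
        rw [hsz, h2]
        have h3 := hP f
        split <;> omega

end InterpLemmas

end Interp
section Bridge

open Tm Finset

variable {F : Type} {ar : F → ℕ}
variable {w : F → ℕ} {w0 : ℕ} {rk : F → ℕ} {P M : ℕ}

lemma core_fn_eq {f : F} {ts : Fin (ar f) → Tm F ar ℕ} :
    Tm.core w (Tm.fn f ts)
      = if h : ar f = 1 ∧ w f = 0 then Tm.core w (ts ⟨0, by omega⟩) else Tm.fn f ts := rfl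

lemma specCount_fn_eq {f : F} {ts : Fin (ar f) → Tm F ar ℕ} :
    Tm.specCount w (Tm.fn f ts)
      = if h : ar f = 1 ∧ w f = 0 then Tm.specCount w (ts ⟨0, by omega⟩) + 1 else 0 := rfl

lemma ground_fn {f : F} {ts : Fin (ar f) → Tm F ar ℕ} (hg : Ground (Tm.fn f ts))
    (i : Fin (ar f)) : Ground (ts i) :=
  fun x => count_fn_zero (hg x) i

lemma ground_core_arg {t : Tm F ar ℕ} (hg : Ground t) {g : F}
    {us : Fin (ar g) → Tm F ar ℕ} (hc : Tm.core w t = Tm.fn g us) (i : Fin (ar g)) :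
    Ground (us i) := by
  intro x
  have h1 : Tm.count x (Tm.core w t) = 0 := by rw [count_core]; exact hg x
  rw [hc] at h1
  exact count_fn_zero h1 i

lemma ground_core_ex :
    ∀ {t : Tm F ar ℕ}, Ground t →
      ∃ (g : F) (us : Fin (ar g) → Tm F ar ℕ), Tm.core w t = Tm.fn g us := by
  intro t
  induction t with
  | var x =>
      intro hg; exfalso; have := hg x; simp [Tm.count] at this
  | fn f ts ih =>
      intro hg
      by_cases hs : ar f = 1 ∧ w f = 0
      · obtain ⟨g, us, h⟩ := ih ⟨0, by omega⟩ (ground_fn hg _)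
        exact ⟨g, us, by rw [core_fn_eq, dif_pos hs]; exact h⟩
      · exact ⟨f, ts, by rw [core_fn_eq, dif_neg hs]⟩

lemma core_args_weight (hw0 : 0 < w0) (hwc : ∀ c, ar c = 0 → w0 ≤ w c)
    {t : Tm F ar ℕ} {g : F} {us : Fin (ar g) → Tm F ar ℕ}
    (hc : Tm.core w t = Tm.fn g us) (i : Fin (ar g)) :
    Tm.weight w w0 (us i) + 1 ≤ Tm.weight w w0 t := by
  have hns := core_not_special hc
  have h1 := weight_fn_arg_lt (ts := us) hw0 hwc hns i
  have h2 : Tm.weight w w0 (Tm.fn g us) = Tm.weight w w0 t := by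
    rw [← hc, weight_core]
  omega

lemma RepV_succ (a : ℕ) (g : F) (us : Fin (ar g) → Tm F ar ℕ) (W j : ℕ) :
    RepV w w0 rk P M (a + 1) g us W j
      = RepV w w0 rk P M a g us W j + (if j = EE (M + 1) W - 1 then P else 0) := by
  unfold RepV
  split_ifs <;> ring

theorem oo_rep (hw0 : 0 < w0) (hwc : ∀ c, ar c = 0 → w0 ≤ w c) :
    ∀ {t : Tm F ar ℕ}, Ground t → ∀ {g : F} {us : Fin (ar g) → Tm F ar ℕ},
      Tm.core w t = Tm.fn g us → ∀ j,
      oo w w0 rk P M t j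
        = RepV w w0 rk P M (Tm.specCount w t) g us (Tm.weight w w0 t) j := by
  intro t
  induction t with
  | var x =>
      intro hg; exfalso; have := hg x; simp [Tm.count] at this
  | fn f ts ih =>
      intro hg g us hc j
      by_cases hs : ar f = 1 ∧ w f = 0
      · rw [core_fn_eq, dif_pos hs] at hc
        have hrec := ih _ (ground_fn hg _) hc j
        rw [oo_fn_spec hs j, hrec, specCount_fn_eq, dif_pos hs, RepV_succ,
          weight_fn_eq_arg (ts := ts) hs ⟨0, by omega⟩]
      · rw [core_fn_eq, dif_neg hs] at hc
        injection hc with h1 h2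
        subst h1
        have h2' : ts = us := eq_of_heq h2
        subst h2'
        rw [oo_fn_ns hs j, specCount_fn_eq, dif_neg hs]
        unfold RepV
        simp only [Nat.zero_mul, Nat.zero_add]

lemma blk_zero_of_ge (hw0 : 0 < w0) (hwc : ∀ c, ar c = 0 → w0 ≤ w c)
    (hM : ∀ f : F, ar f ≤ M) {u : Tm F ar ℕ} {e' b j : ℕ}
    (hEu : EE (M + 1) (Tm.weight w w0 u) ≤ e') (hb : b + e' ≤ j) :
    Blk b (oo w w0 rk P M u) j = 0 := by
  unfold Blk
  rw [if_pos (by omega)]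
  exact oo_supp hw0 hwc hM u _ (by omega)

lemma rep_blocks_zero (hw0 : 0 < w0) (hwc : ∀ c, ar c = 0 → w0 ≤ w c)
    (hM : ∀ f : F, ar f ≤ M) {g : F} {us : Fin (ar g) → Tm F ar ℕ} {W : ℕ}
    (hus : ∀ i, Tm.weight w w0 (us i) + 1 ≤ W) (hW1 : 1 ≤ W) {j : ℕ}
    (hj : EE (M + 1) W - 1 ≤ j) :
    ∑ i : Fin (ar g), Blk (EE (M + 1) (W - 1) * (M - (i : ℕ)))
      (oo w w0 rk P M (us i)) j = 0 := by
  refine Finset.sum_eq_zero fun i _ => ?_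
  have hEi : EE (M + 1) (Tm.weight w w0 (us i)) ≤ EE (M + 1) (W - 1) :=
    EE_mono _ (by omega) (by have := hus i; omega)
  have hE := EE_pred (M + 1) hW1
  have hmul : EE (M + 1) (W - 1) * (M - (i : ℕ)) + EE (M + 1) (W - 1)
      ≤ (M + 1) * EE (M + 1) (W - 1) := by
    calc EE (M + 1) (W - 1) * (M - (i : ℕ)) + EE (M + 1) (W - 1)
        = ((M - (i : ℕ)) + 1) * EE (M + 1) (W - 1) := by ring
      _ ≤ (M + 1) * EE (M + 1) (W - 1) := Nat.mul_le_mul_right _ (by omega)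
  have hEpos := EE_pos (M + 1) (W - 1)
  exact blk_zero_of_ge hw0 hwc hM hEi (by omega)

lemma rep_at_slot (hw0 : 0 < w0) (hwc : ∀ c, ar c = 0 → w0 ≤ w c)
    (hM : ∀ f : F, ar f ≤ M) {a : ℕ} {g : F} {us : Fin (ar g) → Tm F ar ℕ} {W : ℕ}
    (hus : ∀ i, Tm.weight w w0 (us i) + 1 ≤ W) (hW1 : 1 ≤ W) :
    RepV w w0 rk P M a g us W (EE (M + 1) W - 1) = a * P + rk g + 1 := by
  unfold RepV
  rw [if_pos rfl, rep_blocks_zero hw0 hwc hM hus hW1 (le_refl _)]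

theorem oo_mono {prec : F → F → Prop}
    (hw0 : 0 < w0) (hwc : ∀ c, ar c = 0 → w0 ≤ w c) (hM : ∀ f : F, ar f ≤ M)
    (hP : ∀ f : F, rk f + 1 ≤ P) (hrk : ∀ f g, prec f g → rk g < rk f) :
    ∀ {s t : Tm F ar ℕ}, Kbo prec w w0 s t → Ground s →
      GtLex (oo w w0 rk P M s) (oo w w0 rk P M t) := by
  intro s t h
  induction h with
  | @wt s t hc hlt =>
      intro hgs
      obtain ⟨g, us, hcs⟩ := ground_core_ex hgs
      have hW1s : 1 ≤ Tm.weight w w0 s := le_trans hw0 (w0_le_weight hwc s)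
      have hEposW := EE_pos (M + 1) (Tm.weight w w0 s)
      have hsupp_t : ∀ j, EE (M + 1) (Tm.weight w w0 s) - 1 ≤ j →
          oo w w0 rk P M t j = 0 := by
        intro j hj
        apply oo_supp hw0 hwc hM
        have h1 : EE (M + 1) (Tm.weight w w0 t) ≤ EE (M + 1) (Tm.weight w w0 s - 1) :=
          EE_mono _ (by omega) (by omega)
        have h2 := EE_pred (M + 1) hW1s
        have h4 : EE (M + 1) (Tm.weight w w0 s - 1)
            ≤ (M + 1) * EE (M + 1) (Tm.weight w w0 s - 1) :=
          Nat.le_mul_of_pos_left _ (by omega)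
        omega
      refine ⟨EE (M + 1) (Tm.weight w w0 s) - 1, ?_, ?_⟩
      · rw [hsupp_t _ (le_refl _), oo_rep hw0 hwc hgs hcs,
          rep_at_slot hw0 hwc hM (core_args_weight hw0 hwc hcs) hW1s]
        omega
      · intro j hj
        rw [oo_supp hw0 hwc hM s j (by omega), hsupp_t _ (by omega)]
  | @spec s t g ss h' tt hc hw hcs hct hsc =>
      intro hgs
      have hgt : Ground t := fun x => by have := hc x; have := hgs x; omega
      have hW1s : 1 ≤ Tm.weight w w0 s := le_trans hw0 (w0_le_weight hwc s)
      have hEposW := EE_pos (M + 1) (Tm.weight w w0 s)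
      refine ⟨EE (M + 1) (Tm.weight w w0 s) - 1, ?_, ?_⟩
      · rw [oo_rep hw0 hwc hgs hcs, oo_rep hw0 hwc hgt hct, ← hw,
          rep_at_slot hw0 hwc hM (core_args_weight hw0 hwc hcs) hW1s,
          rep_at_slot hw0 hwc hM
            (fun i => by have := core_args_weight hw0 hwc hct i; omega) hW1s]
        have h1 : Tm.specCount w t * P + P ≤ Tm.specCount w s * P := by
          calc Tm.specCount w t * P + P = (Tm.specCount w t + 1) * P := by ring
            _ ≤ Tm.specCount w s * P := Nat.mul_le_mul_right _ (by omega)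
        have h2 := hP h'
        omega
      · intro j hj
        rw [oo_supp hw0 hwc hM s j (by omega), oo_supp hw0 hwc hM t j (by rw [← hw]; omega)]
  | @prec s t g ss h' tt hc hw hcs hct hsc hp =>
      intro hgs
      have hgt : Ground t := fun x => by have := hc x; have := hgs x; omega
      have hW1s : 1 ≤ Tm.weight w w0 s := le_trans hw0 (w0_le_weight hwc s)
      have hEposW := EE_pos (M + 1) (Tm.weight w w0 s)
      refine ⟨EE (M + 1) (Tm.weight w w0 s) - 1, ?_, ?_⟩
      · rw [oo_rep hw0 hwc hgs hcs, oo_rep hw0 hwc hgt hct, ← hw, ← hsc,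
          rep_at_slot hw0 hwc hM (core_args_weight hw0 hwc hcs) hW1s,
          rep_at_slot hw0 hwc hM
            (fun i => by have := core_args_weight hw0 hwc hct i; omega) hW1s]
        have := hrk g h' hp
        omega
      · intro j hj
        rw [oo_supp hw0 hwc hM s j (by omega), oo_supp hw0 hwc hM t j (by rw [← hw]; omega)]
  | @lex s t g ss tt hc hw hcs hct hsc i hpre hk ih =>
      intro hgs
      have hgt : Ground t := fun x => by have := hc x; have := hgs x; omega
      have hW1s : 1 ≤ Tm.weight w w0 s := le_trans hw0 (w0_le_weight hwc s)
      obtain ⟨k', hk'1, hk'2⟩ := ih (ground_core_arg hgs hcs i)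
      have hwsi : ∀ i', Tm.weight w w0 (ss i') + 1 ≤ Tm.weight w w0 s :=
        core_args_weight hw0 hwc hcs
      have hwti : ∀ i', Tm.weight w w0 (tt i') + 1 ≤ Tm.weight w w0 s :=
        fun i' => by have := core_args_weight hw0 hwc hct i'; omega
      have hEsi : ∀ i', EE (M + 1) (Tm.weight w w0 (ss i'))
          ≤ EE (M + 1) (Tm.weight w w0 s - 1) :=
        fun i' => EE_mono _ (by omega) (by have := hwsi i'; omega)
      have hEti : ∀ i', EE (M + 1) (Tm.weight w w0 (tt i'))
          ≤ EE (M + 1) (Tm.weight w w0 s - 1) :=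
        fun i' => EE_mono _ (by omega) (by have := hwti i'; omega)
      have hEpos := EE_pos (M + 1) (Tm.weight w w0 s - 1)
      have hEposW := EE_pos (M + 1) (Tm.weight w w0 s)
      have hE := EE_pred (M + 1) hW1s
      have hk'e : k' < EE (M + 1) (Tm.weight w w0 s - 1) := by
        by_contra hcon
        push_neg at hcon
        have h1 : oo w w0 rk P M (ss i) k' = 0 :=
          oo_supp hw0 hwc hM _ _ (le_trans (hEsi i) hcon)
        have h2 : oo w w0 rk P M (tt i) k' = 0 :=
          oo_supp hw0 hwc hM _ _ (le_trans (hEti i) hcon)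
        omega
      have hiM : (i : ℕ) < ar g := i.isLt
      have hgM : ar g ≤ M := hM g
      have hble : ∀ i1 i2 : Fin (ar g), (i1 : ℕ) < (i2 : ℕ) →
          EE (M + 1) (Tm.weight w w0 s - 1) * (M - (i2 : ℕ))
            + EE (M + 1) (Tm.weight w w0 s - 1)
          ≤ EE (M + 1) (Tm.weight w w0 s - 1) * (M - (i1 : ℕ)) := by
        intro i1 i2 h12
        have hi2 := i2.isLt
        calc EE (M + 1) (Tm.weight w w0 s - 1) * (M - (i2 : ℕ))
              + EE (M + 1) (Tm.weight w w0 s - 1)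
            = EE (M + 1) (Tm.weight w w0 s - 1) * ((M - (i2 : ℕ)) + 1) := by ring
          _ ≤ EE (M + 1) (Tm.weight w w0 s - 1) * (M - (i1 : ℕ)) :=
              Nat.mul_le_mul_left _ (by omega)
      have hbtop : EE (M + 1) (Tm.weight w w0 s - 1) * (M - (i : ℕ))
          + EE (M + 1) (Tm.weight w w0 s - 1) ≤ EE (M + 1) (Tm.weight w w0 s) - 1 := by
        have : EE (M + 1) (Tm.weight w w0 s - 1) * (M - (i : ℕ))
            + EE (M + 1) (Tm.weight w w0 s - 1)
            = ((M - (i : ℕ)) + 1) * EE (M + 1) (Tm.weight w w0 s - 1) := by ring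
        rw [this]
        have h2 : ((M - (i : ℕ)) + 1) ≤ M + 1 := by omega
        have := Nat.mul_le_mul_right (EE (M + 1) (Tm.weight w w0 s - 1)) h2
        omega
      refine ⟨EE (M + 1) (Tm.weight w w0 s - 1) * (M - (i : ℕ)) + k', ?_, ?_⟩
      · rw [oo_rep hw0 hwc hgs hcs, oo_rep hw0 hwc hgt hct, ← hw, ← hsc]
        unfold RepV
        rw [if_neg (by omega)]
        simp only [Nat.zero_add]
        refine Finset.sum_lt_sum (fun i' _ => ?_) ⟨i, Finset.mem_univ i, ?_⟩
        · rcases lt_trichotomy (i' : ℕ) (i : ℕ) with hlt | heq | hgt'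
          · rw [hpre i' hlt]
          · have hii : i' = i := Fin.ext heq
            subst hii
            unfold Blk
            split
            · next hb =>
                have hpos : EE (M + 1) (Tm.weight w w0 s - 1) * (M - (i' : ℕ)) + k'
                    - EE (M + 1) (Tm.weight w w0 s - 1) * (M - (i' : ℕ)) = k' := by omega
                rw [hpos]
                exact le_of_lt hk'1
            · exact le_refl 0
          · rw [blk_zero_of_ge hw0 hwc hM (hEti i') (by have := hble i i' hgt'; omega),
              blk_zero_of_ge hw0 hwc hM (hEsi i') (by have := hble i i' hgt'; omega)]
        · unfold Blk
          rw [if_pos (by omega), if_pos (by omega)]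
          have hpos : EE (M + 1) (Tm.weight w w0 s - 1) * (M - (i : ℕ)) + k'
              - EE (M + 1) (Tm.weight w w0 s - 1) * (M - (i : ℕ)) = k' := by omega
          rw [hpos]
          exact hk'1
      · intro j hj
        rcases Nat.lt_or_ge j (EE (M + 1) (Tm.weight w w0 s)) with hjlt | hjge
        · rw [oo_rep hw0 hwc hgs hcs, oo_rep hw0 hwc hgt hct, ← hw, ← hsc]
          unfold RepV
          congr 1
          refine Finset.sum_congr rfl fun i' _ => ?_
          rcases lt_trichotomy (i' : ℕ) (i : ℕ) with hlt | heq | hgt'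
          · rw [hpre i' hlt]
          · have hii : i' = i := Fin.ext heq
            subst hii
            unfold Blk
            split
            · next hb => exact hk'2 _ (by omega)
            · rfl
          · rw [blk_zero_of_ge hw0 hwc hM (hEsi i') (by have := hble i i' hgt'; omega),
              blk_zero_of_ge hw0 hwc hM (hEti i') (by have := hble i i' hgt'; omega)]
        · rw [oo_supp hw0 hwc hM s j hjge, oo_supp hw0 hwc hM t j (by rw [← hw]; omega)]

end Bridge
section Descent

/-- iterate a step function -/
def giter (s : ℕ → ℕ) : ℕ → ℕ → ℕ
  | 0, x => x
  | k + 1, x => giter s k (s x)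

lemma giter_succ (s : ℕ → ℕ) (k x : ℕ) : giter s (k + 1) x = giter s k (s x) := rfl

lemma giter_mono_x {s : ℕ → ℕ} (hs : Monotone s) : ∀ k, Monotone (giter s k) := by
  intro k
  induction k with
  | zero => exact fun a b h => h
  | succ k ih => exact fun a b h => ih (hs h)

lemma giter_le_of_le {s s' : ℕ → ℕ} (hs' : Monotone s') (hss : ∀ x, s x ≤ s' x) :
    ∀ k x, giter s k x ≤ giter s' k x := by
  intro k
  induction k with
  | zero => intro x; exact le_refl x
  | succ k ih => intro x; exact le_trans (ih (s x)) (giter_mono_x hs' k (hss x))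

lemma giter_id_le {s : ℕ → ℕ} (hid : ∀ x, x ≤ s x) : ∀ k x, x ≤ giter s k x := by
  intro k
  induction k with
  | zero => intro x; exact le_refl x
  | succ k ih => intro x; exact le_trans (le_trans (hid x) (ih (s x))) (le_refl _)

lemma giter_add_le {s : ℕ → ℕ} (hmono : Monotone s) (hid : ∀ x, x ≤ s x) :
    ∀ (k d x : ℕ), giter s k x ≤ giter s (k + d) x := by
  intro k d
  induction d with
  | zero => intro x; exact le_refl _
  | succ d ih =>
      intro x
      calc giter s k x ≤ giter s (k + d) x := ih x
        _ ≤ giter s (k + d) (s x) := giter_mono_x hmono _ (hid x)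
        _ = giter s (k + d + 1) x := rfl
        _ = giter s (k + (d + 1)) x := by rw [Nat.add_assoc]

lemma giter_count_mono {s : ℕ → ℕ} (hmono : Monotone s) (hid : ∀ x, x ≤ s x) :
    ∀ {k k' : ℕ}, k ≤ k' → ∀ x, giter s k x ≤ giter s k' x := by
  intro k k' h x
  obtain ⟨d, rfl⟩ := Nat.le.dest h
  exact giter_add_le hmono hid k d x

/-- bound for the length of descending sequences of degree `D` vectors -/
def glen (C : ℕ) : ℕ → ℕ → ℕ
  | 0, _ => 0
  | D + 1, B => giter (fun x => x + glen C D (B + C * x) + 1) (B + 1) 0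

lemma glen_mono (C : ℕ) : ∀ D {B B' : ℕ}, B ≤ B' → glen C D B ≤ glen C D B' := by
  intro D
  induction D with
  | zero => intro B B' _; exact le_refl 0
  | succ D ih =>
      intro B B' hBB
      show giter (fun x => x + glen C D (B + C * x) + 1) (B + 1) 0
        ≤ giter (fun x => x + glen C D (B' + C * x) + 1) (B' + 1) 0
      have hmono' : Monotone (fun x => x + glen C D (B' + C * x) + 1) := by
        intro a b hab
        have h1 := Nat.mul_le_mul_left C hab
        have h2 := ih (B := B' + C * a) (B' := B' + C * b) (by omega)
        show a + glen C D (B' + C * a) + 1 ≤ b + glen C D (B' + C * b) + 1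
        omega
      have hid' : ∀ x, x ≤ x + glen C D (B' + C * x) + 1 := fun x => by omega
      calc giter (fun x => x + glen C D (B + C * x) + 1) (B + 1) 0
          ≤ giter (fun x => x + glen C D (B' + C * x) + 1) (B + 1) 0 :=
            giter_le_of_le hmono' (fun x => by
              have := ih (B := B + C * x) (B' := B' + C * x) (by omega)
              omega) _ _
        _ ≤ giter (fun x => x + glen C D (B' + C * x) + 1) (B' + 1) 0 :=
            giter_count_mono hmono' hid' (by omega) 0

theorem descent (C : ℕ) : ∀ (D B m : ℕ) (v : ℕ → ℕ → ℕ),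
    (∀ i, i < m → GtLex (v i) (v (i + 1))) →
    (∀ i j, D ≤ j → v i j = 0) →
    (∀ i j, v i j ≤ B + C * i) →
    m ≤ glen C D B := by
  intro D
  induction D with
  | zero =>
      intro B m v hdesc hsupp _
      show m ≤ 0
      by_contra hm
      obtain ⟨k, hk1, _⟩ := hdesc 0 (by omega)
      have h1 := hsupp 0 k (Nat.zero_le k)
      have h2 := hsupp 1 k (Nat.zero_le k)
      omega
  | succ D ihD =>
      intro B m v hdesc hsupp hcoef
      have htop : ∀ i, i < m → v (i + 1) D ≤ v i D := by
        intro i him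
        obtain ⟨k, hk1, hk2⟩ := hdesc i him
        rcases lt_trichotomy k D with h | h | h
        · exact (hk2 D h).symm.le
        · subst h; exact le_of_lt hk1
        · exfalso
          have := hsupp i k (by omega)
          have := hsupp (i + 1) k (by omega)
          omega
      have hstep_mono : Monotone (fun x => x + glen C D (B + C * x) + 1) := by
        intro a b hab
        have h1 := Nat.mul_le_mul_left C hab
        have h2 := glen_mono C D (B := B + C * a) (B' := B + C * b) (by omega)
        show a + glen C D (B + C * a) + 1 ≤ b + glen C D (B + C * b) + 1
        omega
      have hstep_id : ∀ x, x ≤ x + glen C D (B + C * x) + 1 := fun x => by omega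
      -- truncated-chain bound on a no-drop interval
      have htrunc : ∀ a e, a ≤ e → e ≤ m →
          (∀ e', a ≤ e' → e' < e → ¬ v (e' + 1) D < v e' D) →
          e - a ≤ glen C D (B + C * a) := by
        intro a e hae hem hnodrop
        apply ihD (B + C * a) (e - a) (fun p j => if j < D then v (a + p) j else 0)
        · intro p hpe
          obtain ⟨k0, hk01, hk02⟩ := hdesc (a + p) (by omega)
          have hk0D : k0 < D := by
            rcases lt_trichotomy k0 D with h | h | h
            · exact h
            · exfalso; subst h; exact hnodrop (a + p) (by omega) (by omega) hk01
            · exfalso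
              have := hsupp (a + p) k0 (by omega)
              have := hsupp (a + p + 1) k0 (by omega)
              omega
          refine ⟨k0, ?_, ?_⟩
          · simp only [if_pos hk0D]
            exact hk01
          · intro j hj
            by_cases hjD : j < D
            · simp only [if_pos hjD]
              exact hk02 j hj
            · simp only [if_neg hjD]
        · intro p j hDj
          simp only [if_neg (by omega : ¬ j < D)]
        · intro p j
          split
          · calc v (a + p) j ≤ B + C * (a + p) := hcoef _ j
              _ = (B + C * a) + C * p := by ring
          · exact Nat.zero_le _
      have key : ∀ (k a : ℕ), a ≤ m → v a D < k →
          m ≤ giter (fun x => x + glen C D (B + C * x) + 1) k a := by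
        intro k
        induction k with
        | zero => intro a _ h; omega
        | succ k ihk =>
            intro a ham hva
            by_cases hex : ∃ e, a ≤ e ∧ e < m ∧ v (e + 1) D < v e D
            · have hex' : ∃ e, (a ≤ e ∧ e < m ∧ v (e + 1) D < v e D) ∧
                  ∀ e', a ≤ e' → e' < e → ¬ v (e' + 1) D < v e' D := by
                obtain ⟨e, he⟩ := hex
                clear hva ham
                induction e using Nat.strong_induction_on with
                | _ e IH =>
                    by_cases h : ∃ e', (a ≤ e' ∧ e' < m ∧ v (e' + 1) D < v e' D) ∧ e' < e
                    · obtain ⟨e', he', hlt⟩ := h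
                      exact IH e' hlt he'
                    · push_neg at h
                      exact ⟨e, he, fun e' h1 h2 h3 => by
                        have := h e' ⟨h1, by omega, h3⟩; omega⟩
              obtain ⟨e0, ⟨hae, hem, hdrop⟩, hnodrop'⟩ := hex'
              have hnodrop : ∀ e', a ≤ e' → e' < e0 → ¬ v (e' + 1) D < v e' D := hnodrop'
              have hlen := htrunc a e0 hae (by omega) hnodrop
              have hconst : ∀ p, a + p ≤ e0 → v (a + p) D = v a D := by
                intro p
                induction p with
                | zero => intro _; rfl
                | succ p ihp =>
                    intro hpe
                    show v (a + p + 1) D = v a D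
                    have h1 := ihp (by omega)
                    have h2 := htop (a + p) (by omega)
                    have h3 := hnodrop (a + p) (by omega) (by omega)
                    omega
              have hva' : v (e0 + 1) D < k := by
                have h1 := hconst (e0 - a) (by omega)
                rw [show a + (e0 - a) = e0 by omega] at h1
                omega
              have hrec := ihk (e0 + 1) (by omega) hva'
              have hstepa : e0 + 1 ≤ a + glen C D (B + C * a) + 1 := by omega
              calc m ≤ giter (fun x => x + glen C D (B + C * x) + 1) k (e0 + 1) :=
                    hrec
                _ ≤ giter (fun x => x + glen C D (B + C * x) + 1) k
                      (a + glen C D (B + C * a) + 1) :=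
                    giter_mono_x hstep_mono k hstepa
                _ = giter (fun x => x + glen C D (B + C * x) + 1) (k + 1) a := rfl
            · push_neg at hex
              have hlen := htrunc a m ham (le_refl m) (fun e' h1 h2 => by
                have := hex e' h1 h2; omega)
              have h1 : m ≤ a + glen C D (B + C * a) + 1 := by omega
              calc m ≤ a + glen C D (B + C * a) + 1 := h1
                _ ≤ giter (fun x => x + glen C D (B + C * x) + 1) k
                      (a + glen C D (B + C * a) + 1) :=
                    giter_id_le hstep_id k _
                _ = giter (fun x => x + glen C D (B + C * x) + 1) (k + 1) a := rfl
      have h0 := key (B + 1) 0 (Nat.zero_le m) (by have := hcoef 0 D; omega)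
      exact h0

end Descent
section AckBound

lemma ack_add_right (a x z : ℕ) : ack a x + z ≤ ack a (x + z) := by
  induction z with
  | zero => exact le_refl _
  | succ z ih =>
      have h := ack_strictMono_right a (show x + z < x + (z + 1) by omega)
      omega

lemma sq_le_pow (n : ℕ) : (n + 1) * (n + 1) ≤ 2 ^ (n + 2) := by
  induction n with
  | zero => norm_num
  | succ n ih =>
      show (n + 2) * (n + 2) ≤ 2 ^ (n + 3)
      have h1 : n + 2 ≤ 2 ^ (n + 1) := by
        have := Nat.lt_two_pow_self (n := n + 1)
        omega
      have h2 : 2 ^ (n + 3) = 2 * 2 ^ (n + 2) := by ring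
      have h3 : 2 ^ (n + 2) = 2 * 2 ^ (n + 1) := by ring
      have e : (n + 2) * (n + 2) = (n + 1) * (n + 1) + 2 * n + 3 := by ring
      omega

lemma two_pow_le_ack3 (n : ℕ) : 2 ^ (n + 2) ≤ ack 3 n := by
  rw [ack_three]
  have h : (4 : ℕ) ≤ 2 ^ (n + 2) := by
    calc (4 : ℕ) = 2 ^ 2 := by norm_num
      _ ≤ 2 ^ (n + 2) := Nat.pow_le_pow_right (by omega) (by omega)
  have h2 : 2 ^ (n + 3) = 2 * 2 ^ (n + 2) := by ring
  omega

lemma ack_double {A y : ℕ} (hA : 3 ≤ A) (hy : 1 ≤ y) : ack A (2 * y) ≤ ack (A + 2) y := by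
  obtain ⟨z, rfl⟩ : ∃ z, y = z + 1 := ⟨y - 1, by omega⟩
  have h1 : 2 * z + 2 ≤ ack 3 z := by
    rw [ack_three]
    have h2 := Nat.lt_two_pow_self (n := z)
    have h3 : 2 ^ (z + 3) = 8 * 2 ^ z := by ring
    omega
  have h2 : ack 3 z ≤ ack (A + 2) z := ack_le_ack (by omega) (le_refl _)
  calc ack A (2 * (z + 1)) = ack A (2 * z + 2) := by ring_nf
    _ ≤ ack (A + 1) (2 * z + 2) := ack_le_ack (by omega) (le_refl _)
    _ ≤ ack (A + 1) (ack (A + 2) z) := ack_mono_right (A + 1) (le_trans h1 h2)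
    _ = ack (A + 2) (z + 1) := (ack_succ_succ (A + 1) z).symm

lemma ack_le_diag : ∀ (b a : ℕ), ack a b ≤ ack (a + b) 0 := by
  intro b
  induction b with
  | zero => intro a; exact le_refl _
  | succ b ih =>
      intro a
      calc ack a (b + 1) ≤ ack (a + 1) b := ack_succ_right_le_ack_succ_left a b
        _ ≤ ack (a + 1 + b) 0 := ih (a + 1)
        _ = ack (a + (b + 1)) 0 := by rw [show a + 1 + b = a + (b + 1) by omega]

theorem glen_le_ack (C : ℕ) : ∀ (D B : ℕ),
    glen C D B ≤ ack (4 * D + C + 12) (B + C + 2) := by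
  intro D
  induction D with
  | zero => intro B; exact Nat.zero_le _
  | succ D ih =>
      intro B
      set a' := 4 * D + C + 12 with ha'
      -- step bound
      have hstep_le : ∀ x q, x ≤ ack (a' + 2) (B + (C + 2) + q) →
          x + glen C D (B + C * x) + 1 ≤ ack (a' + 2) (B + (C + 2) + (q + 1)) := by
        intro x q hx
        have hu_gt : B + (C + 2) + q < ack (a' + 2) (B + (C + 2) + q) := lt_ack_right _ _
        obtain ⟨n, hn⟩ : ∃ n, ack (a' + 2) (B + (C + 2) + q) = n + 1 :=
          ⟨ack (a' + 2) (B + (C + 2) + q) - 1, by have := ack_pos (a' + 2) (B + (C + 2) + q); omega⟩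
        have h1 : x + glen C D (B + C * x) + 1 ≤ ack a' ((C + 1) * x + (B + C + 3)) := by
          have hg := ih (B + C * x)
          have hadd := ack_add_right a' (B + C * x + C + 2) (x + 1)
          have he : B + C * x + C + 2 + (x + 1) = (C + 1) * x + (B + C + 3) := by ring
          rw [he] at hadd
          omega
        have hx' : x ≤ n + 1 := by omega
        have h2 : (C + 1) * x + (B + C + 3) ≤ (C + 3) * (n + 1) := by
          have ha : (C + 1) * x ≤ (C + 1) * (n + 1) := Nat.mul_le_mul_left _ hx'
          have hb : (C + 3) * (n + 1) = (C + 1) * (n + 1) + 2 * (n + 1) := by ring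
          omega
        have h3 : (C + 3) * (n + 1) ≤ (n + 1) * (n + 1) :=
          Nat.mul_le_mul_right _ (by omega)
        have h4 := sq_le_pow n
        have h5 := two_pow_le_ack3 n
        have h6 : ack 3 n ≤ ack (a' + 1) n := ack_le_ack (by omega) (le_refl _)
        have h7 : x + glen C D (B + C * x) + 1 ≤ ack a' (ack (a' + 1) n) :=
          le_trans h1 (ack_mono_right a' (by omega))
        have h8 : ack a' (ack (a' + 1) n) = ack (a' + 1) (n + 1) := (ack_succ_succ a' n).symm
        have h9 : ack (a' + 1) (ack (a' + 2) (B + (C + 2) + q))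
            = ack (a' + 2) (B + (C + 2) + q + 1) := (ack_succ_succ (a' + 1) _).symm
        rw [h8, ← hn] at h7
        rw [h9] at h7
        exact le_trans h7 (ack_mono_right _ (by omega))
      -- iteration bound
      have hiter : ∀ p q x, x ≤ ack (a' + 2) (B + (C + 2) + q) →
          giter (fun x => x + glen C D (B + C * x) + 1) p x
            ≤ ack (a' + 2) (B + (C + 2) + q + p) := by
        intro p
        induction p with
        | zero =>
            intro q x hx
            exact le_trans hx (ack_mono_right _ (by omega))
        | succ p ihp =>
            intro q x hx
            have hs := hstep_le x q hx
            have := ihp (q + 1) _ hs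
            rw [show B + (C + 2) + (q + 1) + p = B + (C + 2) + q + (p + 1) by omega] at this
            exact this
      have hmain : glen C (D + 1) B ≤ ack (a' + 2) (B + (C + 2) + 0 + (B + 1)) := by
        have := hiter (B + 1) 0 0 (Nat.zero_le _)
        exact this
      have habs : ack (a' + 2) (B + (C + 2) + 0 + (B + 1)) ≤ ack (a' + 4) (B + C + 2) := by
        calc ack (a' + 2) (B + (C + 2) + 0 + (B + 1))
            ≤ ack (a' + 2) (2 * (B + C + 2)) := ack_mono_right _ (by omega)
          _ ≤ ack (a' + 2 + 2) (B + C + 2) := ack_double (by omega) (by omega)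
          _ = ack (a' + 4) (B + C + 2) := by rw [show a' + 2 + 2 = a' + 4 by omega]
      have hfin : ack (a' + 4) (B + C + 2) = ack (4 * (D + 1) + C + 12) (B + C + 2) := by
        rw [show a' + 4 = 4 * (D + 1) + C + 12 by omega]
      exact le_trans hmain (le_trans habs (le_of_eq hfin))

end AckBound
section Final

open Tm Finset

variable {F : Type} {ar : F → ℕ}

lemma weight_le_mul_size {w : F → ℕ} {w0 Wm : ℕ} (hW : ∀ f : F, w f ≤ Wm) (h0 : w0 ≤ Wm) :
    ∀ t : Tm F ar ℕ, Tm.weight w w0 t ≤ Wm * Tm.size t := by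
  intro t
  induction t with
  | var x => show w0 ≤ Wm * 1; omega
  | fn f ts ih =>
      show w f + ∑ i, Tm.weight w w0 (ts i) ≤ Wm * (1 + ∑ i, Tm.size (ts i))
      have h1 : ∑ i, Tm.weight w w0 (ts i) ≤ ∑ i, Wm * Tm.size (ts i) :=
        Finset.sum_le_sum fun i _ => ih i
      have h2 : (∑ i, Wm * Tm.size (ts i)) = Wm * ∑ i, Tm.size (ts i) :=
        (Finset.mul_sum _ _ _).symm
      have h3 : Wm * (1 + ∑ i, Tm.size (ts i)) = Wm + Wm * ∑ i, Tm.size (ts i) := by ring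
      have h4 := hW f
      omega

lemma EE_le_pow (m1 : ℕ) : ∀ W, EE m1 W ≤ (m1 + 1) ^ (W + 1) := by
  intro W
  induction W with
  | zero =>
      have h : (m1 + 1) ^ 1 = m1 + 1 := pow_one _
      show 1 ≤ (m1 + 1) ^ 1
      omega
  | succ W ih =>
      show m1 * EE m1 W + 1 ≤ (m1 + 1) ^ (W + 2)
      have h1 : m1 * EE m1 W ≤ m1 * (m1 + 1) ^ (W + 1) := Nat.mul_le_mul_left _ ih
      have h2 : (m1 + 1) ^ (W + 2) = m1 * (m1 + 1) ^ (W + 1) + (m1 + 1) ^ (W + 1) := by ring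
      have h3 : 1 ≤ (m1 + 1) ^ (W + 1) := Nat.one_le_pow _ _ (by omega)
      omega

lemma final_arith {D0 n a P Q : ℕ} (hn : 1 ≤ n) (hD0 : D0 ≤ 2 ^ (a * n)) :
    4 * D0 + Q + 12 + (P * n + Q + 2) ≤ 2 ^ ((a + P + 2 * Q + 17) * n) := by
  have hb2 : P * n + 2 * Q + 14 ≤ 2 ^ (P * n + 2 * Q + 14) := (Nat.lt_two_pow_self).le
  have h4D : 4 * D0 ≤ 2 ^ (a * n + 2) := by
    have h : 2 ^ (a * n + 2) = 4 * 2 ^ (a * n) := by ring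
    omega
  have e1 : a * n + 2 ≤ a * n + (P * n + 2 * Q + 14) + 2 := by omega
  have e2 : P * n + 2 * Q + 14 ≤ a * n + (P * n + 2 * Q + 14) + 2 := by omega
  have m1 := Nat.pow_le_pow_right (show 1 ≤ 2 by omega) e1
  have m2 := Nat.pow_le_pow_right (show 1 ≤ 2 by omega) e2
  have hdouble : 2 ^ (a * n + (P * n + 2 * Q + 14) + 2) + 2 ^ (a * n + (P * n + 2 * Q + 14) + 2)
      = 2 ^ (a * n + (P * n + 2 * Q + 14) + 3) := by ring
  have hexp : a * n + (P * n + 2 * Q + 14) + 3 ≤ (a + P + 2 * Q + 17) * n := by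
    have h : (a + P + 2 * Q + 17) * n = a * n + P * n + 2 * Q * n + 17 * n := by ring
    have h2 : 2 * Q ≤ 2 * Q * n := Nat.le_mul_of_pos_right _ (by omega)
    omega
  have hfin := Nat.pow_le_pow_right (show 1 ≤ 2 by omega) hexp
  omega

end Final
/-- Let `F` be a finite signature containing a constant and `R` a
finite TRS compatible with a Knuth–Bendix order `≻kbo` (induced by an admissible weight
function and a precedence).  Then there is a `c` such that for every ground term `t`,
every `→_R`-derivation from `t` has length at most `Ack(2^{c·|t|}, 0)`. -/
theorem kbo_derivation_bound_finite_sig {F : Type} [Finite F] {ar : F → ℕ}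
    (hconst : ∃ c, ar c = 0)
    (prec : F → F → Prop)
    (hirr : ∀ f, ¬ prec f f)
    (htrans : ∀ f g h, prec f g → prec g h → prec f h)
    (w : F → ℕ) (w0 : ℕ) (hw0 : 0 < w0)
    (hwc : ∀ c, ar c = 0 → w0 ≤ w c)
    (hadm : ∀ f, ar f = 1 → w f = 0 → ∀ g, g ≠ f → prec f g)
    (R : Finset (Tm F ar ℕ × Tm F ar ℕ))
    (hTRS : IsTRS (↑R : Set (Tm F ar ℕ × Tm F ar ℕ)))
    (hcompat : ∀ p ∈ R, Kbo prec w w0 p.1 p.2) :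
    ∃ c : ℕ, ∀ t : Tm F ar ℕ,
      (∀ x : ℕ, Tm.count x t = 0) →
      ∀ (m : ℕ) (d : ℕ → Tm F ar ℕ), d 0 = t →
        ChainOf (Rew (↑R : Set (Tm F ar ℕ × Tm F ar ℕ))) m d →
        m ≤ ack (2 ^ (c * Tm.size t)) 0 := by
  classical
  haveI : Fintype F := Fintype.ofFinite F
  haveI : Nonempty F := ⟨hconst.choose⟩
  -- constants
  set M := Finset.univ.sup ar with hMdef
  have hM : ∀ f : F, ar f ≤ M := fun f => Finset.le_sup (Finset.mem_univ f)
  set rk : F → ℕ := fun f => {g | prec f g}.ncard with hrkdef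
  set P := Nat.card F with hPdef
  have hP : ∀ f : F, rk f + 1 ≤ P := by
    intro f
    simp only [hrkdef]
    have h1 : {g | prec f g} ⊂ Set.univ := by
      rw [Set.ssubset_univ_iff]
      intro he
      exact hirr f (by rw [← Set.mem_setOf_eq (p := fun g => prec f g)]; rw [he]; exact Set.mem_univ f)
    have h2 : {g | prec f g}.ncard < (Set.univ : Set F).ncard :=
      Set.ncard_lt_ncard h1 (Set.toFinite _)
    rw [Set.ncard_univ] at h2
    omega
  have hrk : ∀ f g, prec f g → rk g < rk f := by
    intro f g hfg
    simp only [hrkdef]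
    have hsub : {h | prec g h} ⊆ {h | prec f h} := fun h hh => htrans f g h hfg hh
    have h1 : {h | prec g h} ⊂ {h | prec f h} := by
      refine (Set.ssubset_iff_of_subset hsub).mpr ⟨g, hfg, fun hg => hirr g hg⟩
    exact Set.ncard_lt_ncard h1 (Set.toFinite _)
  set K := R.sup (fun p => Tm.size p.2) with hKdef
  have hK : ∀ p ∈ R, Tm.size p.2 ≤ K := fun p hp => Finset.le_sup (f := fun p => Tm.size p.2) hp
  set Wm := Finset.univ.sup w + w0 with hWmdef
  have hWm : ∀ f : F, w f ≤ Wm := fun f => by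
    have := Finset.le_sup (f := w) (Finset.mem_univ f)
    omega
  have hWm0 : w0 ≤ Wm := by omega
  -- the constant
  refine ⟨(M + 2) * (Wm + 1) + P + 2 * (P * K) + 17, ?_⟩
  intro t ht m d hd0 hchain
  have hgt : Ground t := ht
  set n := Tm.size t with hndef
  have hn : 1 ≤ n := size_pos t
  -- chain invariants
  have hfacts : ∀ i : ℕ, Ground (d (min i m)) ∧
      Tm.weight w w0 (d (min i m)) ≤ Tm.weight w w0 t ∧
      Tm.size (d (min i m)) ≤ n + K * i := by
    intro i
    induction i with
    | zero =>
        rw [show min 0 m = 0 by omega, hd0]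
        exact ⟨hgt, le_refl _, by omega⟩
    | succ i ihi =>
        obtain ⟨hgi, hwi, hsi⟩ := ihi
        have hKmono : K * i ≤ K * (i + 1) := Nat.mul_le_mul_left _ (by omega)
        rcases Nat.lt_or_ge i m with him | him
        · have h1 : min i m = i := by omega
          have h2 : min (i + 1) m = i + 1 := by omega
          rw [h1] at hgi hwi hsi
          have hrw : Rew (↑R : Set (Tm F ar ℕ × Tm F ar ℕ)) (d i) (d (i + 1)) :=
            hchain i him
          rw [h2]
          refine ⟨rew_ground hwc hcompat hrw hgi, ?_, ?_⟩
          · exact le_trans (kbo_weight_le (rew_kbo hwc hcompat hrw)) hwi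
          · have h3 := rew_size hcompat hK hrw
            have h4 : K * (i + 1) = K * i + K := by ring
            omega
        · have h1 : min i m = m := by omega
          have h2 : min (i + 1) m = m := by omega
          rw [h1] at hgi hwi hsi
          rw [h2]
          exact ⟨hgi, hwi, by omega⟩
  -- the descending vector chain
  have hdesc : ∀ i, i < m →
      GtLex (oo w w0 rk P M (d (min i m))) (oo w w0 rk P M (d (min (i + 1) m))) := by
    intro i him
    have h1 : min i m = i := by omega
    have h2 : min (i + 1) m = i + 1 := by omega
    rw [h1, h2]
    have hgi := (hfacts i).1
    rw [h1] at hgi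
    exact oo_mono hw0 hwc hM hP hrk (rew_kbo hwc hcompat (hchain i him)) hgi
  have hsupp : ∀ i j, EE (M + 1) (Tm.weight w w0 t) ≤ j →
      oo w w0 rk P M (d (min i m)) j = 0 := by
    intro i j hj
    apply oo_supp hw0 hwc hM
    have h1 := (hfacts i).2.1
    have h2 : EE (M + 1) (Tm.weight w w0 (d (min i m))) ≤ EE (M + 1) (Tm.weight w w0 t) :=
      EE_mono _ (by omega) h1
    omega
  have hcoef : ∀ i j, oo w w0 rk P M (d (min i m)) j ≤ P * n + (P * K) * i := by
    intro i j
    have h1 := oo_coeff (w := w) (w0 := w0) (M := M) hP (d (min i m)) j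
    have h2 := (hfacts i).2.2
    have h3 : P * Tm.size (d (min i m)) ≤ P * (n + K * i) := Nat.mul_le_mul_left _ h2
    have h4 : P * (n + K * i) = P * n + (P * K) * i := by ring
    omega
  -- apply descent
  have hdlen : m ≤ glen (P * K) (EE (M + 1) (Tm.weight w w0 t)) (P * n) :=
    descent (P * K) (EE (M + 1) (Tm.weight w w0 t)) (P * n) m
      (fun i => oo w w0 rk P M (d (min i m))) hdesc hsupp hcoef
  -- Ackermann bound
  have hack1 := glen_le_ack (P * K) (EE (M + 1) (Tm.weight w w0 t)) (P * n)
  have hack2 := ack_le_diag (P * n + P * K + 2)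
    (4 * EE (M + 1) (Tm.weight w w0 t) + P * K + 12)
  -- degree bound
  have hdeg : EE (M + 1) (Tm.weight w w0 t) ≤ 2 ^ ((M + 2) * (Wm + 1) * n) := by
    have h1 : Tm.weight w w0 t ≤ Wm * n := weight_le_mul_size hWm hWm0 t
    have h2 : EE (M + 1) (Tm.weight w w0 t) ≤ EE (M + 1) (Wm * n) :=
      EE_mono _ (by omega) h1
    have h3 : EE (M + 1) (Wm * n) ≤ (M + 2) ^ (Wm * n + 1) := EE_le_pow (M + 1) (Wm * n)
    have h4 : (M + 2) ^ (Wm * n + 1) ≤ (M + 2) ^ ((Wm + 1) * n) := by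
      apply Nat.pow_le_pow_right (by omega)
      have h : (Wm + 1) * n = Wm * n + n := by ring
      omega
    have h5 : (M + 2) ^ ((Wm + 1) * n) ≤ (2 ^ (M + 2)) ^ ((Wm + 1) * n) :=
      Nat.pow_le_pow_left (Nat.lt_two_pow_self (n := M + 2)).le _
    have h6 : (2 ^ (M + 2)) ^ ((Wm + 1) * n) = 2 ^ ((M + 2) * ((Wm + 1) * n)) := by
      rw [← pow_mul]
    have h7 : (M + 2) * ((Wm + 1) * n) = (M + 2) * (Wm + 1) * n := by ring
    rw [h6, h7] at h5
    omega
  have harith := final_arith (a := (M + 2) * (Wm + 1)) (P := P) (Q := P * K) hn hdeg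
  have hlast : ack (4 * EE (M + 1) (Tm.weight w w0 t) + P * K + 12 + (P * n + P * K + 2)) 0
      ≤ ack (2 ^ (((M + 2) * (Wm + 1) + P + 2 * (P * K) + 17) * n)) 0 :=
    ack_le_ack harith (le_refl 0)
  exact le_trans hdlen (le_trans hack1 (le_trans hack2 hlast))
end

section
/- Let C be a Δ-restricted interpretation for a finite signature F, and set M := max({c_f : f ∈ F} ∪ {d_f : f ∈ F} ∪ {1}) and N := max({b_{f,i} : f ∈ F, 1 ≤ i ≤ arity(f)} ∪ {1}). Then for every ground term t over F and every real Δ > 0, [t]_Δ ≤ M·(|t| + N·|t|²·Δ). -/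
/-- A Δ-linear interpretation for a signature `F` with arity function `ar`. -/
structure DeltaLin (F : Type) (ar : F → ℕ) where
  a : (f : F) → Fin (ar f) → ℕ
  b : (f : F) → Fin (ar f) → ℕ
  c : F → ℕ
  d : F → ℕ
  pos : ∀ f i, 1 ≤ a f i + b f i

namespace DeltaLin

variable {F : Type} {ar : F → ℕ}

/-- The interpretation function
`f[Δ](z₁,…,zₙ) = Σᵢ a_{f,i}·zᵢ + Σᵢ b_{f,i}·zᵢ·Δ + c_f·Δ + d_f`. -/
noncomputable def fA (C : DeltaLin F ar) (f : F) (Δ : ℝ) (z : Fin (ar f) → ℝ) : ℝ :=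
  (∑ i, (C.a f i : ℝ) * z i) + (∑ i, (C.b f i : ℝ) * z i * Δ) +
    (C.c f : ℝ) * Δ + (C.d f : ℝ)

/-- The parameter function `f^i(Δ) = Δ/(a_{f,i} + b_{f,i}·Δ)`. -/
noncomputable def par (C : DeltaLin F ar) (f : F) (i : Fin (ar f)) (Δ : ℝ) : ℝ :=
  Δ / ((C.a f i : ℝ) + (C.b f i : ℝ) * Δ)

/-- The interpretation is Δ-restricted if `a_{f,i} ∈ {0,1}` for all `f` and `i`. -/
def Restricted (C : DeltaLin F ar) : Prop := ∀ f i, C.a f i ≤ 1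

/-- Context-dependent evaluation of ground terms:
`[f(t₁,…,tₙ)]_Δ = f[Δ]([t₁]_{f¹(Δ)},…,[tₙ]_{fⁿ(Δ)})`. -/
noncomputable def evalG (C : DeltaLin F ar) : Tm F ar Empty → ℝ → ℝ
  | .var x, _ => x.elim
  | .fn f ts, Δ => C.fA f Δ fun i => evalG C (ts i) (C.par f i Δ)

end DeltaLin

/-- For a Δ-restricted interpretation `C` over a finite signature,
with `M = max({c_f} ∪ {d_f} ∪ {1})` and `N = max({b_{f,i}} ∪ {1})`, every ground term
`t` and every `Δ > 0` satisfy `[t]_Δ ≤ M·(|t| + N·|t|²·Δ)`. -/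
theorem deltaRestricted_eval_bound {F : Type} [Fintype F] {ar : F → ℕ}
    (C : DeltaLin F ar) (hres : C.Restricted) (M N : ℕ)
    (hM : M = (Finset.univ.sup C.c) ⊔ (Finset.univ.sup C.d) ⊔ 1)
    (hN : N = (Finset.univ.sup fun f => Finset.univ.sup fun i => C.b f i) ⊔ 1) :
    ∀ (t : Tm F ar Empty) (Δ : ℝ), 0 < Δ →
      C.evalG t Δ ≤ (M : ℝ) * ((Tm.size t : ℝ) + (N : ℝ) * (Tm.size t : ℝ) ^ 2 * Δ) := by
  -- auxiliary facts
  have hsize : ∀ u : Tm F ar Empty, (1:ℝ) ≤ (Tm.size u : ℝ) := by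
    intro u
    have : 1 ≤ Tm.size u := by cases u with
      | var x => exact x.elim
      | fn f ts => simp [Tm.size]
    exact_mod_cast this
  have hM1 : (1:ℝ) ≤ (M:ℝ) := by
    have : 1 ≤ M := hM ▸ le_sup_right
    exact_mod_cast this
  have hN1 : (1:ℝ) ≤ (N:ℝ) := by
    have : 1 ≤ N := hN ▸ le_sup_right
    exact_mod_cast this
  intro t
  induction t with
  | var x => exact x.elim
  | fn f ts ih =>
    intro Δ hΔ
    have hMc : (C.c f : ℝ) ≤ (M:ℝ) := by
      have : C.c f ≤ M := by
        rw [hM]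
        exact le_trans (Finset.le_sup (Finset.mem_univ f)) (le_trans le_sup_left le_sup_left)
      exact_mod_cast this
    have hMd : (C.d f : ℝ) ≤ (M:ℝ) := by
      have : C.d f ≤ M := by
        rw [hM]
        exact le_trans (Finset.le_sup (Finset.mem_univ f)) (le_trans le_sup_right le_sup_left)
      exact_mod_cast this
    have hNb : ∀ i, (C.b f i : ℝ) ≤ (N:ℝ) := by
      intro i
      have : C.b f i ≤ N := by
        rw [hN]
        refine le_trans ?_ le_sup_left
        exact le_trans (Finset.le_sup (Finset.mem_univ i))
          (Finset.le_sup (f := fun f => Finset.univ.sup fun i => C.b f i) (Finset.mem_univ f))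
      exact_mod_cast this
    set s : Fin (ar f) → ℝ := fun i => ((ts i).size : ℝ) with hs
    set z : Fin (ar f) → ℝ := fun i => C.evalG (ts i) (C.par f i Δ) with hz
    have hs1 : ∀ i, (1:ℝ) ≤ s i := fun i => hsize (ts i)
    have key : ∀ i, (C.a f i : ℝ) * z i + (C.b f i : ℝ) * z i * Δ ≤
        (M:ℝ) * (s i + (N:ℝ) * (s i + (s i)^2) * Δ) := by
      intro i
      have hD : (0:ℝ) < (C.a f i : ℝ) + (C.b f i : ℝ) * Δ := by
        rcases Nat.eq_zero_or_pos (C.a f i) with h0 | h1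
        · have hb : 1 ≤ C.b f i := by have := C.pos f i; omega
          have : (1:ℝ) ≤ (C.b f i : ℝ) := by exact_mod_cast hb
          rw [h0]
          push_cast
          nlinarith
        · have : (1:ℝ) ≤ (C.a f i : ℝ) := by exact_mod_cast h1
          positivity
      have hpar : 0 < C.par f i Δ := div_pos hΔ hD
      have hihi := ih i (C.par f i Δ) hpar
      have hparΔ : ((C.a f i : ℝ) + (C.b f i : ℝ) * Δ) * C.par f i Δ = Δ := by
        rw [DeltaLin.par]; field_simp
      have ha1 : (C.a f i : ℝ) ≤ 1 := by exact_mod_cast hres f i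
      have hbN := hNb i
      have hzle : ((C.a f i : ℝ) + (C.b f i : ℝ) * Δ) * z i ≤
          (M:ℝ) * (((C.a f i : ℝ) + (C.b f i : ℝ) * Δ) * s i + (N:ℝ) * (s i)^2 * Δ) := by
        calc ((C.a f i : ℝ) + (C.b f i : ℝ) * Δ) * z i
            ≤ ((C.a f i : ℝ) + (C.b f i : ℝ) * Δ) *
              ((M:ℝ) * (s i + (N:ℝ) * (s i)^2 * C.par f i Δ)) :=
              mul_le_mul_of_nonneg_left hihi (le_of_lt hD)
          _ = (M:ℝ) * (((C.a f i : ℝ) + (C.b f i : ℝ) * Δ) * s i +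
              (N:ℝ) * (s i)^2 * (((C.a f i : ℝ) + (C.b f i : ℝ) * Δ) * C.par f i Δ)) := by ring
          _ = _ := by rw [hparΔ]
      have h1 : (C.a f i : ℝ) * z i + (C.b f i : ℝ) * z i * Δ =
          ((C.a f i : ℝ) + (C.b f i : ℝ) * Δ) * z i := by ring
      rw [h1]
      refine le_trans hzle ?_
      have hsi := hs1 i
      have hD2 : (C.a f i : ℝ) + (C.b f i : ℝ) * Δ ≤ 1 + (N:ℝ) * Δ := by nlinarith
      have hin : ((C.a f i : ℝ) + (C.b f i : ℝ) * Δ) * s i + (N:ℝ) * (s i)^2 * Δ ≤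
          s i + (N:ℝ) * (s i + (s i)^2) * Δ := by
        nlinarith [mul_le_mul_of_nonneg_right hD2 (show (0:ℝ) ≤ s i by linarith)]
      exact mul_le_mul_of_nonneg_left hin (by linarith)
    -- sum it up
    have hsum : ∑ i, ((C.a f i : ℝ) * z i + (C.b f i : ℝ) * z i * Δ) ≤
        ∑ i, (M:ℝ) * (s i + (N:ℝ) * (s i + (s i)^2) * Δ) :=
      Finset.sum_le_sum (fun i _ => key i)
    set S : ℝ := ∑ i, s i with hS
    set Q : ℝ := ∑ i, (s i)^2 with hQ
    have hS0 : 0 ≤ S := Finset.sum_nonneg (fun i _ => le_trans zero_le_one (hs1 i))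
    have hQS : Q ≤ S^2 := by
      have h1 : ∀ i ∈ Finset.univ, (s i)^2 ≤ s i * S := by
        intro i _
        have hle : s i ≤ S :=
          Finset.single_le_sum (fun j _ => le_trans zero_le_one (hs1 j)) (Finset.mem_univ i)
        have hnn : 0 ≤ s i := le_trans zero_le_one (hs1 i)
        calc (s i)^2 = s i * s i := sq (s i) ▸ rfl
          _ ≤ s i * S := mul_le_mul_of_nonneg_left hle hnn
      calc Q ≤ ∑ i, s i * S := Finset.sum_le_sum h1
        _ = S * S := by rw [← Finset.sum_mul]
        _ = S^2 := (sq S).symm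
    have hsumR : ∑ i, (M:ℝ) * (s i + (N:ℝ) * (s i + (s i)^2) * Δ) =
        (M:ℝ) * (S + (N:ℝ) * (S + Q) * Δ) := by
      have hterm : ∀ i : Fin (ar f), (M:ℝ) * (s i + (N:ℝ) * (s i + (s i)^2) * Δ) =
          (M:ℝ) * s i + (M:ℝ) * (N:ℝ) * Δ * s i + (M:ℝ) * (N:ℝ) * Δ * (s i)^2 := fun i => by ring
      simp_rw [hterm]
      rw [Finset.sum_add_distrib, Finset.sum_add_distrib, ← Finset.mul_sum, ← Finset.mul_sum,
        ← Finset.mul_sum, ← hS, ← hQ]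
      ring
    have hsize' : ((Tm.size (Tm.fn f ts) : ℕ) : ℝ) = 1 + S := by
      simp only [Tm.size, hS, hs]
      push_cast
      ring
    show C.fA f Δ (fun i => C.evalG (ts i) (C.par f i Δ)) ≤ _
    rw [DeltaLin.fA, hsize']
    have hLHS : (∑ i, (C.a f i : ℝ) * z i) + (∑ i, (C.b f i : ℝ) * z i * Δ) =
        ∑ i, ((C.a f i : ℝ) * z i + (C.b f i : ℝ) * z i * Δ) :=
      (Finset.sum_add_distrib).symm
    have hmain : (∑ i, (C.a f i : ℝ) * z i) + (∑ i, (C.b f i : ℝ) * z i * Δ) ≤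
        (M:ℝ) * (S + (N:ℝ) * (S + Q) * Δ) := by
      rw [hLHS, ← hsumR]; exact hsum
    have hfin : (M:ℝ) * (S + (N:ℝ) * (S + Q) * Δ) + (C.c f : ℝ) * Δ + (C.d f : ℝ) ≤
        (M:ℝ) * ((1 + S) + (N:ℝ) * (1 + S)^2 * Δ) := by
      nlinarith [mul_le_mul_of_nonneg_right (mul_le_mul_of_nonneg_right hQS
          (le_trans zero_le_one hN1)) (le_of_lt hΔ),
        mul_le_mul_of_nonneg_right hMc (le_of_lt hΔ),
        mul_le_mul_of_nonneg_right hM1 (le_of_lt hΔ),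
        mul_le_mul_of_nonneg_right hN1 (le_of_lt hΔ),
        mul_nonneg (mul_nonneg (le_trans zero_le_one hM1) (le_trans zero_le_one hN1))
          (mul_nonneg hS0 (le_of_lt hΔ))]
    calc (∑ i, (C.a f i : ℝ) * z i) + (∑ i, (C.b f i : ℝ) * z i * Δ) +
          (C.c f : ℝ) * Δ + (C.d f : ℝ)
        ≤ (M:ℝ) * (S + (N:ℝ) * (S + Q) * Δ) + (C.c f : ℝ) * Δ + (C.d f : ℝ) := by
          linarith [hmain]
      _ ≤ (M:ℝ) * ((1 + S) + (N:ℝ) * (1 + S)^2 * Δ) := hfin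
end

section
/- Let R be a TRS over a finite signature F that is compatible with some Δ-restricted interpretation. Then R is terminating, and there exists C ∈ ℕ such that for every term t ∈ T(F,V), every →_R-derivation starting from t has length at most C·|t|². -/
namespace DeltaLin

variable {F : Type} {ar : F → ℕ}

/-- Evaluation of a term under a Δ-assignment `α` (mapping each `Δ` and each variable
to a real): `[α,Δ](x) = α(Δ,x)` and
`[α,Δ](f(t₁,…,tₙ)) = f[Δ]([α,f¹(Δ)](t₁),…,[α,fⁿ(Δ)](tₙ))`. -/
noncomputable def evalA (C : DeltaLin F ar) (α : ℝ → ℕ → ℝ) : Tm F ar ℕ → ℝ → ℝ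
  | .var x, Δ => α Δ x
  | .fn f ts, Δ => C.fA f Δ fun i => evalA C α (ts i) (C.par f i Δ)

/-- Compatibility of the interpretation with a TRS `R`:
`[α,Δ](l) − [α,Δ](r) ≥ Δ` for every rule `l → r ∈ R`, every `Δ > 0` and every
Δ-assignment `α` with nonnegative values. -/
def Compat (C : DeltaLin F ar) (R : Set (Tm F ar ℕ × Tm F ar ℕ)) : Prop :=
  ∀ p ∈ R, ∀ Δ : ℝ, 0 < Δ → ∀ α : ℝ → ℕ → ℝ, (∀ Δ' x, 0 ≤ α Δ' x) →
    Δ ≤ C.evalA α p.1 Δ - C.evalA α p.2 Δ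

end DeltaLin

namespace DeltaLin

variable {F : Type} {ar : F → ℕ} (C : DeltaLin F ar)

lemma denom_pos (f : F) (i : Fin (ar f)) {Δ : ℝ} (hΔ : 0 < Δ) :
    0 < (C.a f i : ℝ) + (C.b f i : ℝ) * Δ := by
  have h := C.pos f i
  rcases Nat.eq_zero_or_pos (C.a f i) with h0 | h0
  · have hb : 1 ≤ C.b f i := by omega
    have hb' : (1:ℝ) ≤ C.b f i := by exact_mod_cast hb
    have ha' : (C.a f i : ℝ) = 0 := by exact_mod_cast h0
    nlinarith
  · have ha' : (1:ℝ) ≤ C.a f i := by exact_mod_cast h0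
    nlinarith [mul_nonneg (Nat.cast_nonneg (C.b f i)) hΔ.le]

lemma par_pos (f : F) (i : Fin (ar f)) {Δ : ℝ} (hΔ : 0 < Δ) : 0 < C.par f i Δ :=
  div_pos hΔ (C.denom_pos f i hΔ)

lemma denom_mul_par (f : F) (i : Fin (ar f)) {Δ : ℝ} (hΔ : 0 < Δ) :
    ((C.a f i : ℝ) + (C.b f i : ℝ) * Δ) * C.par f i Δ = Δ := by
  have h := (C.denom_pos f i hΔ).ne'
  rw [DeltaLin.par]
  field_simp

lemma eval_nonneg (α : ℝ → ℕ → ℝ) (hα : ∀ Δ x, 0 ≤ α Δ x) (t : Tm F ar ℕ) :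
    ∀ {Δ : ℝ}, 0 < Δ → 0 ≤ C.evalA α t Δ := by
  induction t with
  | var x => intro Δ hΔ; exact hα Δ x
  | fn f ts ih =>
    intro Δ hΔ
    simp only [evalA, fA]
    have h1 : 0 ≤ ∑ i, (C.a f i : ℝ) * C.evalA α (ts i) (C.par f i Δ) :=
      Finset.sum_nonneg fun i _ =>
        mul_nonneg (Nat.cast_nonneg _) (ih i (C.par_pos f i hΔ))
    have h2 : 0 ≤ ∑ i, (C.b f i : ℝ) * C.evalA α (ts i) (C.par f i Δ) * Δ :=
      Finset.sum_nonneg fun i _ =>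
        mul_nonneg (mul_nonneg (Nat.cast_nonneg _) (ih i (C.par_pos f i hΔ))) hΔ.le
    have h3 : (0:ℝ) ≤ (C.c f : ℝ) * Δ := mul_nonneg (Nat.cast_nonneg _) hΔ.le
    have h4 : (0:ℝ) ≤ (C.d f : ℝ) := Nat.cast_nonneg _
    linarith

lemma eval_subst (α : ℝ → ℕ → ℝ) (hα : ∀ Δ x, 0 ≤ α Δ x) (σ : ℕ → Tm F ar ℕ)
    (t : Tm F ar ℕ) : ∀ {Δ : ℝ}, 0 < Δ →
    C.evalA α (t.subst σ) Δ =
      C.evalA (fun Δ' x => max (C.evalA α (σ x) Δ') 0) t Δ := by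
  induction t with
  | var x =>
    intro Δ hΔ
    simp only [Tm.subst, evalA]
    exact (max_eq_left (C.eval_nonneg α hα (σ x) hΔ)).symm
  | fn f ts ih =>
    intro Δ hΔ
    simp only [Tm.subst, evalA]
    exact congrArg (C.fA f Δ) (funext fun i => ih i (C.par_pos f i hΔ))

lemma rew_decrease {R : Set (Tm F ar ℕ × Tm F ar ℕ)} (hcompat : C.Compat R)
    {s t : Tm F ar ℕ} (h : Rew R s t) :
    ∀ {Δ : ℝ}, 0 < Δ →
      C.evalA (fun _ _ => 0) t Δ + Δ ≤ C.evalA (fun _ _ => 0) s Δ := by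
  induction h with
  | @rule l r σ hmem =>
    intro Δ hΔ
    set α0 : ℝ → ℕ → ℝ := fun _ _ => 0
    have hα0 : ∀ Δ x, (0:ℝ) ≤ α0 Δ x := fun _ _ => le_refl 0
    have hc := hcompat (l, r) hmem Δ hΔ
      (fun Δ' x => max (C.evalA α0 (σ x) Δ') 0)
      (fun Δ' x => le_max_right _ _)
    rw [← C.eval_subst α0 hα0 σ l hΔ, ← C.eval_subst α0 hα0 σ r hΔ] at hc
    linarith
  | @congr f ts i t' hrw ih =>
    intro Δ hΔ
    set α0 : ℝ → ℕ → ℝ := fun _ _ => 0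
    set δ := C.par f i Δ with hδdef
    have hδ : 0 < δ := C.par_pos f i hΔ
    have hih := ih hδ
    simp only [evalA, fA]
    set z : Fin (ar f) → ℝ := fun j => C.evalA α0 (ts j) (C.par f j Δ) with hz
    set z' : Fin (ar f) → ℝ :=
      fun j => C.evalA α0 (Function.update ts i t' j) (C.par f j Δ) with hz'
    have hzz : ∀ j, j ≠ i → z' j = z j := by
      intro j hj
      simp [hz', hz, Function.update_of_ne hj]
    have hz'i : z' i = C.evalA α0 t' δ := by simp [hz', hδdef]
    have h1 : ∑ j, (C.a f j : ℝ) * z j - ∑ j, (C.a f j : ℝ) * z' j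
        = (C.a f i : ℝ) * (z i - z' i) := by
      rw [← Finset.sum_sub_distrib]
      rw [Finset.sum_eq_single_of_mem i (Finset.mem_univ i)]
      · ring
      · intro j _ hj; rw [hzz j hj]; ring
    have h2 : ∑ j, (C.b f j : ℝ) * z j * Δ - ∑ j, (C.b f j : ℝ) * z' j * Δ
        = (C.b f i : ℝ) * (z i - z' i) * Δ := by
      rw [← Finset.sum_sub_distrib]
      rw [Finset.sum_eq_single_of_mem i (Finset.mem_univ i)]
      · ring
      · intro j _ hj; rw [hzz j hj]; ring
    have hkey : ((C.a f i : ℝ) + (C.b f i : ℝ) * Δ) * δ = Δ :=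
      C.denom_mul_par f i hΔ
    have hdpos := C.denom_pos f i hΔ
    have hzi : z' i + δ ≤ z i := by rw [hz'i]; exact hih
    have : Δ ≤ ((C.a f i : ℝ) + (C.b f i : ℝ) * Δ) * (z i - z' i) := by
      calc Δ = ((C.a f i : ℝ) + (C.b f i : ℝ) * Δ) * δ := hkey.symm
        _ ≤ _ := by
          apply mul_le_mul_of_nonneg_left _ hdpos.le
          linarith
    linarith

end DeltaLin

namespace DeltaLin

variable {F : Type} {ar : F → ℕ} (C : DeltaLin F ar)

lemma eval_bound (hres : ∀ f i, C.a f i ≤ 1) (P Q : ℕ)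
    (hc : ∀ f, C.c f ≤ P) (hd : ∀ f, C.d f ≤ Q)
    (hb : ∀ f i, Q * C.b f i ≤ 2 * P) (t : Tm F ar ℕ) :
    ∀ {Δ : ℝ}, 0 < Δ →
      C.evalA (fun _ _ => 0) t Δ ≤ (P:ℝ) * Δ * (t.size : ℝ)^2 + (Q:ℝ) * t.size := by
  induction t with
  | var x =>
    intro Δ hΔ
    simp only [evalA, Tm.size]
    have h1 : (0:ℝ) ≤ (P:ℝ) * Δ * (1:ℝ)^2 := by positivity
    have h2 : (0:ℝ) ≤ (Q:ℝ) := Nat.cast_nonneg _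
    push_cast
    nlinarith
  | fn f ts ih =>
    intro Δ hΔ
    simp only [evalA, fA, Tm.size]
    set α0 : ℝ → ℕ → ℝ := fun _ _ => 0
    set z : Fin (ar f) → ℝ := fun j => C.evalA α0 (ts j) (C.par f j Δ) with hz
    set N : Fin (ar f) → ℝ := fun j => ((ts j).size : ℝ) with hN
    have hN1 : ∀ j, (1:ℝ) ≤ N j := by
      intro j
      have : 1 ≤ (ts j).size := by
        cases hts : ts j <;> simp [Tm.size]
      simp only [hN]
      exact_mod_cast this
    have hNnn : ∀ j, (0:ℝ) ≤ N j := fun j => le_trans zero_le_one (hN1 j)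
    -- per-child bound
    have hper : ∀ j, (C.a f j : ℝ) * z j + (C.b f j : ℝ) * z j * Δ
        ≤ (P:ℝ) * Δ * (N j)^2 + (Q:ℝ) * N j + 2 * (P:ℝ) * Δ * N j := by
      intro j
      have hδ : 0 < C.par f j Δ := C.par_pos f j hΔ
      have hdpos := C.denom_pos f j hΔ
      have hkey := C.denom_mul_par f j hΔ
      have hzb := ih j hδ
      have hznn : 0 ≤ z j := C.eval_nonneg α0 (fun _ _ => le_refl 0) (ts j) hδ
      have step1 : ((C.a f j : ℝ) + (C.b f j : ℝ) * Δ) * z j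
          ≤ ((C.a f j : ℝ) + (C.b f j : ℝ) * Δ) *
            ((P:ℝ) * C.par f j Δ * (N j)^2 + (Q:ℝ) * N j) :=
        mul_le_mul_of_nonneg_left hzb hdpos.le
      have step2 : ((C.a f j : ℝ) + (C.b f j : ℝ) * Δ) *
            ((P:ℝ) * C.par f j Δ * (N j)^2 + (Q:ℝ) * N j)
          = (P:ℝ) * Δ * (N j)^2
            + ((C.a f j : ℝ) + (C.b f j : ℝ) * Δ) * (Q:ℝ) * N j := by
        have : ((C.a f j : ℝ) + (C.b f j : ℝ) * Δ) * ((P:ℝ) * C.par f j Δ * (N j)^2)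
            = (P:ℝ) * (((C.a f j : ℝ) + (C.b f j : ℝ) * Δ) * C.par f j Δ) * (N j)^2 := by
          ring
        rw [mul_add, this, hkey]; ring
      have ha1 : (C.a f j : ℝ) ≤ 1 := by exact_mod_cast hres f j
      have hbj : (Q:ℝ) * (C.b f j : ℝ) ≤ 2 * P := by exact_mod_cast hb f j
      have step3 : ((C.a f j : ℝ) + (C.b f j : ℝ) * Δ) * (Q:ℝ) * N j
          ≤ (Q:ℝ) * N j + 2 * (P:ℝ) * Δ * N j := by
        have hQnn : (0:ℝ) ≤ Q := Nat.cast_nonneg _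
        nlinarith [mul_nonneg (mul_nonneg (sub_nonneg.mpr ha1) hQnn) (hNnn j),
          mul_le_mul_of_nonneg_right hbj (mul_nonneg hΔ.le (hNnn j))]
      nlinarith
    have hsum : ∑ j, (C.a f j : ℝ) * z j + ∑ j, (C.b f j : ℝ) * z j * Δ
        ≤ ∑ j, ((P:ℝ) * Δ * (N j)^2 + (Q:ℝ) * N j + 2 * (P:ℝ) * Δ * N j) := by
      rw [← Finset.sum_add_distrib]
      exact Finset.sum_le_sum fun j _ => hper j
    set S : ℝ := ∑ j, N j with hS
    have hSnn : 0 ≤ S := Finset.sum_nonneg fun j _ => hNnn j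
    have hsq : ∑ j, (N j)^2 ≤ S^2 := by
      have h1 : ∀ j ∈ Finset.univ, (N j)^2 ≤ N j * S := by
        intro j _
        have : N j ≤ S := Finset.single_le_sum (fun k _ => hNnn k) (Finset.mem_univ j)
        nlinarith [hNnn j]
      calc ∑ j, (N j)^2 ≤ ∑ j, N j * S := Finset.sum_le_sum h1
        _ = S * S := by rw [← Finset.sum_mul]
        _ = S^2 := by ring
    have hsum2 : ∑ j, ((P:ℝ) * Δ * (N j)^2 + (Q:ℝ) * N j + 2 * (P:ℝ) * Δ * N j)
        = (P:ℝ) * Δ * (∑ j, (N j)^2) + (Q:ℝ) * S + 2 * (P:ℝ) * Δ * S := by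
      rw [Finset.sum_add_distrib, Finset.sum_add_distrib, ← Finset.mul_sum,
        ← Finset.mul_sum, ← Finset.mul_sum]
    have hsz : ((1 + ∑ i, (ts i).size : ℕ) : ℝ) = 1 + S := by
      push_cast [hS, hN]
      ring
    rw [hsz]
    have hcf : (C.c f : ℝ) ≤ P := by exact_mod_cast hc f
    have hdf : (C.d f : ℝ) ≤ Q := by exact_mod_cast hd f
    have hPnn : (0:ℝ) ≤ P := Nat.cast_nonneg _
    nlinarith [hsum, hsum2,
      mul_le_mul_of_nonneg_left hsq (mul_nonneg hPnn hΔ.le),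
      mul_le_mul_of_nonneg_right hcf hΔ.le]

end DeltaLin

/-- If a TRS `R` over a finite signature is compatible with a
Δ-restricted interpretation, then `R` is terminating and there is a constant `C ∈ ℕ`
such that every `→_R`-derivation starting from a term `t` has length at most `C·|t|²`. -/
theorem deltaRestricted_quadratic {F : Type} [Finite F] {ar : F → ℕ}
    (R : Set (Tm F ar ℕ × Tm F ar ℕ)) (hTRS : IsTRS R)
    (C : DeltaLin F ar) (hres : ∀ f i, C.a f i ≤ 1) (hcompat : C.Compat R) :
    (¬ ∃ d : ℕ → Tm F ar ℕ, ∀ i, Rew R (d i) (d (i + 1))) ∧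
    ∃ K : ℕ, ∀ (t : Tm F ar ℕ) (m : ℕ) (d : ℕ → Tm F ar ℕ),
      d 0 = t → ChainOf (Rew R) m d → m ≤ K * (Tm.size t) ^ 2 := by
  classical
  obtain ⟨c0, hc0⟩ := Finite.exists_le (fun f : F => C.c f)
  obtain ⟨d0, hd0⟩ := Finite.exists_le (fun f : F => C.d f)
  obtain ⟨b0, hb0'⟩ := Finite.exists_le (fun p : Σ f : F, Fin (ar f) => C.b p.1 p.2)
  have hb0 : ∀ f i, C.b f i ≤ b0 := fun f i => hb0' ⟨f, i⟩
  set Q : ℕ := d0 + 1 with hQdef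
  set P : ℕ := c0 + Q * b0 with hPdef
  have hc : ∀ f, C.c f ≤ P := fun f => le_trans (hc0 f) (by omega)
  have hd : ∀ f, C.d f ≤ Q := fun f => le_trans (hd0 f) (by omega)
  have hb : ∀ f i, Q * C.b f i ≤ 2 * P := by
    intro f i
    have h1 := hb0 f i
    have h2 : Q * C.b f i ≤ Q * b0 := Nat.mul_le_mul_left _ h1
    omega
  have main2 : ∀ (t : Tm F ar ℕ) (m : ℕ) (d : ℕ → Tm F ar ℕ),
      d 0 = t → ChainOf (Rew R) m d → m ≤ (P + Q) * t.size ^ 2 := by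
    intro t m d hd0' hchain
    set α0 : ℝ → ℕ → ℝ := fun _ _ => 0 with hα0
    have hα0nn : ∀ Δ x, (0:ℝ) ≤ α0 Δ x := fun _ _ => le_refl 0
    have hn : 1 ≤ t.size := by cases t <;> simp [Tm.size]
    have hn1 : (1:ℝ) ≤ (t.size : ℝ) := by exact_mod_cast hn
    have hnpos : (0:ℝ) < (t.size : ℝ) := by linarith
    set Δ : ℝ := 1 / (t.size : ℝ) with hΔdef
    have hΔ : 0 < Δ := by positivity
    have tele : ∀ k, k ≤ m → C.evalA α0 (d k) Δ + k * Δ ≤ C.evalA α0 t Δ := by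
      intro k
      induction k with
      | zero => intro _; rw [hd0']; simp
      | succ k ih =>
        intro hk
        have h1 := ih (by omega)
        have h2 := C.rew_decrease hcompat (hchain k (by omega)) hΔ
        push_cast
        linarith
    have h1 := tele m le_rfl
    have h2 := C.eval_bound hres P Q hc hd hb t hΔ
    have h3 := C.eval_nonneg α0 hα0nn (d m) hΔ
    have h4 : (m:ℝ) * Δ ≤ (P:ℝ) * Δ * (t.size:ℝ)^2 + (Q:ℝ) * (t.size:ℝ) := by
      linarith
    have e1 : (m:ℝ) * Δ * (t.size:ℝ) = m := by
      rw [hΔdef]; field_simp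
    have e2 : (P:ℝ) * Δ * (t.size:ℝ)^3 = (P:ℝ) * (t.size:ℝ)^2 := by
      rw [hΔdef]; field_simp
    have h5 := mul_le_mul_of_nonneg_right h4 hnpos.le
    have hfinal : (m:ℝ) ≤ ((P:ℝ) + Q) * (t.size:ℝ)^2 := by nlinarith [h5, e1, e2]
    exact_mod_cast hfinal
  refine ⟨?_, P + Q, main2⟩
  rintro ⟨d, hd'⟩
  have h := main2 (d 0) ((P + Q) * (d 0).size ^ 2 + 1) d rfl (fun i _ => hd' i)
  omega
end
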